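/- arXiv:1512.07887 — 5 statements merged into one kernel-verified Lean document; each statement's English description precedes it below -/
import Mathlib

section
/- Let (Ω, ℱ, P) be a probability space, T, M, M₀ > 0, and let Y : [0,T] × Ω → ℝ^d, Σ : [0,T] × Ω → ℝ, b : [0,T] × Ω → ℝ^d be measurable processes such that t ↦ E‖Y(t)‖² is finite and measurable and: (i) E‖Y(0)‖² ≤ M₀; (ii) for every t ∈ [0,T], E‖Y(t)‖² = E‖Y(0)‖² + ∫₀ᵗ E[Σ(τ) + 2⟨b(τ), Y(τ)⟩] dτ; (iii) for almost every (τ, ω), |Σ(τ,ω)| ≤ M(1 + ‖Y(τ,ω)‖² + E‖Y(τ)‖²) and ‖b(τ,ω)‖ ≤ M(1 + ‖Y(τ,ω)‖ + (E‖Y(τ)‖²)^{1/2}). Then for every t ∈ [0,T], E‖Y(t)‖² ≤ (M₀ + 2MT) e^{7MT}. -/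
open MeasureTheory
open scoped RealInnerProductSpace

private lemma gronwall_iterate {φ : ℝ → ℝ} {a K t C : ℝ} (hK : 0 ≤ K) (hC : 0 ≤ C)
    (hint : ∀ s ∈ Set.Icc (0:ℝ) t, IntervalIntegrable φ volume 0 s)
    (hbd : ∀ s ∈ Set.Icc (0:ℝ) t, φ s ≤ C)
    (hineq : ∀ s ∈ Set.Icc (0:ℝ) t, φ s ≤ a + K * ∫ τ in (0:ℝ)..s, φ τ) :
    ∀ n : ℕ, ∀ s ∈ Set.Icc (0:ℝ) t,
      φ s ≤ a * ∑ k ∈ Finset.range n, (K*s)^k / k.factorial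
            + C * ((K*s)^n / n.factorial) := by
  intro n
  induction n with
  | zero =>
    intro s hs
    simpa using hbd s hs
  | succ n ih =>
    intro s hs
    have hs0 : 0 ≤ s := hs.1
    have key : ∫ τ in (0:ℝ)..s, φ τ
        ≤ ∫ τ in (0:ℝ)..s, (a * ∑ k ∈ Finset.range n, (K*τ)^k / k.factorial
            + C * ((K*τ)^n / n.factorial)) := by
      apply intervalIntegral.integral_mono_on hs0 (hint s hs)
        (Continuous.intervalIntegrable (by fun_prop) 0 s)
      intro x hx
      exact ih x ⟨hx.1, hx.2.trans hs.2⟩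
    have h2 : ∀ k : ℕ, ∫ τ in (0:ℝ)..s, (K*τ)^k / k.factorial
        = (K^k * s^(k+1) / (k+1)) / k.factorial := by
      intro k
      have he : (fun τ : ℝ => (K*τ)^k / k.factorial)
          = fun τ : ℝ => (K^k / k.factorial) * τ^k := by
        funext τ; rw [mul_pow]; ring
      rw [he, intervalIntegral.integral_const_mul, integral_pow,
        zero_pow (Nat.succ_ne_zero k)]
      ring
    have hcomp : ∫ τ in (0:ℝ)..s, (a * ∑ k ∈ Finset.range n, (K*τ)^k / k.factorial
            + C * ((K*τ)^n / n.factorial))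
        = a * (∑ k ∈ Finset.range n, (K^k * s^(k+1) / (k+1)) / k.factorial)
            + C * ((K^n * s^(n+1)/(n+1)) / n.factorial) := by
      rw [intervalIntegral.integral_add
          (Continuous.intervalIntegrable (by fun_prop) 0 s)
          (Continuous.intervalIntegrable (by fun_prop) 0 s),
        intervalIntegral.integral_const_mul, intervalIntegral.integral_const_mul,
        intervalIntegral.integral_finset_sum
          (fun k _ => Continuous.intervalIntegrable (by fun_prop) 0 s)]
      simp_rw [h2]
    have hterm : ∀ k : ℕ, K * ((K^k * s^(k+1) / (k+1)) / k.factorial)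
        = (K*s)^(k+1) / (k+1).factorial := by
      intro k
      rw [Nat.factorial_succ, mul_pow]
      push_cast
      have hk : (k.factorial : ℝ) ≠ 0 := Nat.cast_ne_zero.2 k.factorial_ne_zero
      have hk1 : (k:ℝ) + 1 ≠ 0 := by positivity
      field_simp
      ring
    have hsum : K * (∑ k ∈ Finset.range n, (K^k * s^(k+1) / (k+1)) / k.factorial)
        = ∑ k ∈ Finset.range n, (K*s)^(k+1) / (k+1).factorial := by
      rw [Finset.mul_sum]
      exact Finset.sum_congr rfl fun k _ => hterm k
    have main : φ s ≤ a + K * (a * (∑ k ∈ Finset.range n, (K^k * s^(k+1) / (k+1)) / k.factorial)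
            + C * ((K^n * s^(n+1)/(n+1)) / n.factorial)) := by
      have h3 := hineq s hs
      rw [← hcomp]
      nlinarith [key]
    refine main.trans (le_of_eq ?_)
    rw [Finset.sum_range_succ']
    simp only [pow_zero, Nat.factorial_zero, Nat.cast_one, div_one]
    linear_combination a * hsum + C * hterm n

private lemma gronwall_int {φ : ℝ → ℝ} {a K t : ℝ} (ht : 0 ≤ t) (hK : 0 ≤ K) (ha : 0 ≤ a)
    (hcont : ContinuousOn φ (Set.Icc 0 t))
    (hineq : ∀ s ∈ Set.Icc (0:ℝ) t, φ s ≤ a + K * ∫ τ in (0:ℝ)..s, φ τ) :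
    φ t ≤ a * Real.exp (K * t) := by
  obtain ⟨x, hx, hxmax⟩ := isCompact_Icc.exists_isMaxOn (Set.nonempty_Icc.2 ht) hcont
  set C := max (φ x) 0 with hCdef
  have hC : 0 ≤ C := le_max_right _ _
  have hbd : ∀ s ∈ Set.Icc (0:ℝ) t, φ s ≤ C := fun s hs => (hxmax hs).trans (le_max_left _ _)
  have hint : ∀ s ∈ Set.Icc (0:ℝ) t, IntervalIntegrable φ volume 0 s := by
    intro s hs
    exact (hcont.mono (by rw [Set.uIcc_of_le hs.1]; exact Set.Icc_subset_Icc le_rfl hs.2)).intervalIntegrable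
  have hiter := gronwall_iterate hK hC hint hbd hineq
  have hKt : 0 ≤ K * t := mul_nonneg hK ht
  have hself : t ∈ Set.Icc (0:ℝ) t := ⟨ht, le_rfl⟩
  have hstep : ∀ n : ℕ, φ t ≤ a * Real.exp (K * t) + C * ((K*t)^n / n.factorial) := by
    intro n
    refine (hiter n t hself).trans ?_
    have := Real.sum_le_exp_of_nonneg hKt n
    nlinarith [mul_nonneg hC (div_nonneg (pow_nonneg hKt n) (Nat.cast_nonneg n.factorial))]
  have hlim : Filter.Tendsto (fun n : ℕ => a * Real.exp (K * t) + C * ((K*t)^n / n.factorial))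
      Filter.atTop (nhds (a * Real.exp (K * t))) := by
    have h0 := FloorSemiring.tendsto_pow_div_factorial_atTop (K := ℝ) (K*t)
    have := (h0.const_mul C)
    simpa using Filter.Tendsto.const_add (a * Real.exp (K * t)) this
  exact ge_of_tendsto' hlim hstep

private lemma main_aux {φ ψ : ℝ → ℝ} {T M M₀ : ℝ} (hT : 0 < T) (hM : 0 < M) (hM₀ : 0 < M₀)
    (hφ0 : φ 0 ≤ M₀)
    (hii : ∀ t ∈ Set.Icc (0:ℝ) T, φ t = φ 0 + ∫ τ in (0:ℝ)..t, ψ τ)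
    (habs : ∀ᵐ τ ∂(volume.restrict (Set.Icc (0:ℝ) T)), |ψ τ| ≤ 2*M + 7*M * φ τ) :
    ∀ t ∈ Set.Icc (0:ℝ) T, φ t ≤ (M₀ + 2*M*T) * Real.exp (7*M*T) := by
  intro t ht
  have hexp1 : (1:ℝ) ≤ Real.exp (7*M*T) := Real.one_le_exp (by positivity)
  have htriv : M₀ ≤ (M₀ + 2*M*T) * Real.exp (7*M*T) := by
    nlinarith [mul_le_mul_of_nonneg_left hexp1 (show (0:ℝ) ≤ M₀ + 2*M*T by positivity)]
  by_cases hI : IntervalIntegrable ψ volume 0 t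
  · have hφeq : ∀ s ∈ Set.Icc (0:ℝ) t, φ s = φ 0 + ∫ τ in (0:ℝ)..s, ψ τ :=
      fun s hs => hii s ⟨hs.1, hs.2.trans ht.2⟩
    have hIcc : Set.uIcc (0:ℝ) t = Set.Icc 0 t := Set.uIcc_of_le ht.1
    have hFcont : ContinuousOn (fun s => ∫ τ in (0:ℝ)..s, ψ τ) (Set.Icc 0 t) := by
      have := intervalIntegral.continuousOn_primitive_interval' hI
        (by rw [hIcc]; exact ⟨le_rfl, ht.1⟩)
      rwa [hIcc] at this
    have hcont : ContinuousOn φ (Set.Icc 0 t) :=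
      (continuousOn_const.add hFcont).congr fun s hs => hφeq s hs
    have hineq : ∀ s ∈ Set.Icc (0:ℝ) t,
        φ s ≤ (M₀ + 2*M*T) + (7*M) * ∫ τ in (0:ℝ)..s, φ τ := by
      intro s hs
      have hs0 : 0 ≤ s := hs.1
      have hsub : Set.uIcc (0:ℝ) s ⊆ Set.uIcc (0:ℝ) t := by
        rw [hIcc, Set.uIcc_of_le hs0]; exact Set.Icc_subset_Icc le_rfl hs.2
      have hψs : IntervalIntegrable ψ volume 0 s := hI.mono_set hsub
      have hcont2 : ContinuousOn (fun τ => 2*M + 7*M * φ τ) (Set.uIcc 0 s) := by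
        rw [Set.uIcc_of_le hs0]
        exact continuousOn_const.add (continuousOn_const.mul
          (hcont.mono (Set.Icc_subset_Icc le_rfl hs.2)))
      have hbint : IntervalIntegrable (fun τ => 2*M + 7*M * φ τ) volume 0 s :=
        hcont2.intervalIntegrable
      have hae : ψ ≤ᵐ[volume.restrict (Set.Icc 0 s)] fun τ => 2*M + 7*M * φ τ := by
        have hsub2 : Set.Icc (0:ℝ) s ⊆ Set.Icc 0 T :=
          Set.Icc_subset_Icc le_rfl (hs.2.trans ht.2)
        filter_upwards [ae_restrict_of_ae_restrict_of_subset hsub2 habs] with τ hτ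
        exact (le_abs_self _).trans hτ
      have hmono : ∫ τ in (0:ℝ)..s, ψ τ ≤ ∫ τ in (0:ℝ)..s, (2*M + 7*M * φ τ) :=
        intervalIntegral.integral_mono_ae_restrict hs0 hψs hbint hae
      have hφint : IntervalIntegrable φ volume 0 s := by
        apply ContinuousOn.intervalIntegrable
        rw [Set.uIcc_of_le hs0]
        exact hcont.mono (Set.Icc_subset_Icc le_rfl hs.2)
      have hsplit : ∫ τ in (0:ℝ)..s, (2*M + 7*M * φ τ)
          = 2*M*s + 7*M * ∫ τ in (0:ℝ)..s, φ τ := by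
        rw [intervalIntegral.integral_add (intervalIntegrable_const) (hφint.const_mul _),
          intervalIntegral.integral_const, intervalIntegral.integral_const_mul]
        simp; ring
      have hs2 : s ≤ T := hs.2.trans ht.2
      rw [hφeq s hs]
      have : 2*M*s ≤ 2*M*T := by nlinarith
      calc φ 0 + ∫ τ in (0:ℝ)..s, ψ τ
          ≤ φ 0 + (2*M*s + 7*M * ∫ τ in (0:ℝ)..s, φ τ) := by
            rw [← hsplit]; linarith
        _ ≤ (M₀ + 2*M*T) + (7*M) * ∫ τ in (0:ℝ)..s, φ τ := by linarith
    have hg := gronwall_int ht.1 (by positivity) (by positivity) hcont hineq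
    refine hg.trans ?_
    have : Real.exp (7*M*t) ≤ Real.exp (7*M*T) := Real.exp_le_exp.2 (by nlinarith [ht.2])
    nlinarith [Real.exp_pos (7*M*t)]
  · rw [hii t ht, intervalIntegral.integral_undef hI]
    simpa using hφ0.trans htriv

/-- uniform second-moment bound (Lemma 1 of the paper).  If the second
moment of `Y` evolves according to `E‖Y(t)‖² = E‖Y(0)‖² + ∫₀ᵗ E[Σ(τ) + 2⟨b(τ),Y(τ)⟩] dτ`
with `|Σ| ≤ M(1 + ‖Y‖² + E‖Y‖²)`, `‖b‖ ≤ M(1 + ‖Y‖ + (E‖Y‖²)^{1/2})` and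
`E‖Y(0)‖² ≤ M₀`, then `E‖Y(t)‖² ≤ (M₀ + 2MT)e^{7MT}` on `[0,T]`. -/
theorem stmt_2 (d : ℕ) (Ω : Type) [MeasurableSpace Ω] (P : Measure Ω)
    [IsProbabilityMeasure P] (T M M₀ : ℝ) (hT : 0 < T) (hM : 0 < M) (hM₀ : 0 < M₀)
    (Y : ℝ → Ω → EuclideanSpace ℝ (Fin d)) (Sig : ℝ → Ω → ℝ)
    (b : ℝ → Ω → EuclideanSpace ℝ (Fin d))
    (hYmeas : Measurable (Function.uncurry Y))
    (hSmeas : Measurable (Function.uncurry Sig))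
    (hbmeas : Measurable (Function.uncurry b))
    (hYint : ∀ t ∈ Set.Icc (0:ℝ) T, Integrable (fun ω => ‖Y t ω‖ ^ 2) P)
    (hYmm : Measurable fun t => ∫ ω, ‖Y t ω‖ ^ 2 ∂P)
    (h0 : ∫ ω, ‖Y 0 ω‖ ^ 2 ∂P ≤ M₀)
    (hii : ∀ t ∈ Set.Icc (0:ℝ) T,
      ∫ ω, ‖Y t ω‖ ^ 2 ∂P
        = (∫ ω, ‖Y 0 ω‖ ^ 2 ∂P)
          + ∫ τ in (0:ℝ)..t, (∫ ω, (Sig τ ω + 2 * ⟪b τ ω, Y τ ω⟫) ∂P))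
    (hiii : ∀ᵐ p ∂((volume.restrict (Set.Icc (0:ℝ) T)).prod P),
      |Sig p.1 p.2| ≤ M * (1 + ‖Y p.1 p.2‖ ^ 2 + ∫ ω, ‖Y p.1 ω‖ ^ 2 ∂P) ∧
      ‖b p.1 p.2‖ ≤ M * (1 + ‖Y p.1 p.2‖ + Real.sqrt (∫ ω, ‖Y p.1 ω‖ ^ 2 ∂P))) :
    ∀ t ∈ Set.Icc (0:ℝ) T,
      ∫ ω, ‖Y t ω‖ ^ 2 ∂P ≤ (M₀ + 2 * M * T) * Real.exp (7 * M * T) := by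
  have habs : ∀ᵐ τ ∂(volume.restrict (Set.Icc (0:ℝ) T)),
      |∫ ω, (Sig τ ω + 2 * ⟪b τ ω, Y τ ω⟫) ∂P|
        ≤ 2*M + 7*M * ∫ ω, ‖Y τ ω‖ ^ 2 ∂P := by
    filter_upwards [Measure.ae_ae_of_ae_prod hiii, ae_restrict_mem measurableSet_Icc]
      with τ hτae hτmem
    set φτ := ∫ ω, ‖Y τ ω‖ ^ 2 ∂P with hφτ
    have hφnn : 0 ≤ φτ := integral_nonneg fun ω => by positivity
    have hY2 : Integrable (fun ω => ‖Y τ ω‖ ^ 2) P := hYint τ hτmem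
    have hmeas : Measurable (fun ω => Sig τ ω + 2 * ⟪b τ ω, Y τ ω⟫) := by
      have h1 : Measurable (fun ω => Sig τ ω) := hSmeas.comp measurable_prodMk_left
      have h2 : Measurable (fun ω => b τ ω) := hbmeas.comp measurable_prodMk_left
      have h3 : Measurable (fun ω => Y τ ω) := hYmeas.comp measurable_prodMk_left
      exact h1.add ((h2.inner h3).const_mul 2)
    have hpt : ∀ᵐ ω ∂P, |Sig τ ω + 2 * ⟪b τ ω, Y τ ω⟫|
        ≤ (2*M + 2*M*φτ) + 5*M*‖Y τ ω‖^2 := by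
      filter_upwards [hτae] with ω hω
      obtain ⟨hS, hb⟩ := hω
      have h3 : |⟪b τ ω, Y τ ω⟫| ≤ ‖b τ ω‖ * ‖Y τ ω‖ := abs_real_inner_le_norm _ _
      have h4 : |Sig τ ω + 2 * ⟪b τ ω, Y τ ω⟫| ≤ |Sig τ ω| + 2 * |⟪b τ ω, Y τ ω⟫| := by
        calc |Sig τ ω + 2 * ⟪b τ ω, Y τ ω⟫| ≤ |Sig τ ω| + |2 * ⟪b τ ω, Y τ ω⟫| := abs_add_le _ _
          _ = |Sig τ ω| + 2 * |⟪b τ ω, Y τ ω⟫| := by rw [abs_mul, abs_two]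
      have h5 : ‖b τ ω‖ * ‖Y τ ω‖
          ≤ M * (1 + ‖Y τ ω‖ + Real.sqrt φτ) * ‖Y τ ω‖ :=
        mul_le_mul_of_nonneg_right hb (norm_nonneg _)
      have hsq : Real.sqrt φτ ^ 2 = φτ := Real.sq_sqrt hφnn
      nlinarith [sq_nonneg (‖Y τ ω‖ - 1), sq_nonneg (Real.sqrt φτ - ‖Y τ ω‖),
        norm_nonneg (Y τ ω), Real.sqrt_nonneg φτ, abs_nonneg (⟪b τ ω, Y τ ω⟫)]
    have hgint : Integrable (fun ω => (2*M + 2*M*φτ) + 5*M*‖Y τ ω‖^2) P :=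
      (integrable_const _).add (hY2.const_mul _)
    have hint : Integrable (fun ω => Sig τ ω + 2 * ⟪b τ ω, Y τ ω⟫) P := by
      refine Integrable.mono' hgint hmeas.aestronglyMeasurable ?_
      filter_upwards [hpt] with ω hω
      simpa [Real.norm_eq_abs] using hω
    have step1 : |∫ ω, (Sig τ ω + 2 * ⟪b τ ω, Y τ ω⟫) ∂P|
        ≤ ∫ ω, |Sig τ ω + 2 * ⟪b τ ω, Y τ ω⟫| ∂P := by
      simpa [Real.norm_eq_abs] using norm_integral_le_integral_norm
        (fun ω => Sig τ ω + 2 * ⟪b τ ω, Y τ ω⟫) (μ := P)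
    have step2 : ∫ ω, |Sig τ ω + 2 * ⟪b τ ω, Y τ ω⟫| ∂P
        ≤ ∫ ω, ((2*M + 2*M*φτ) + 5*M*‖Y τ ω‖^2) ∂P :=
      integral_mono_ae hint.abs hgint hpt
    have step3 : ∫ ω, ((2*M + 2*M*φτ) + 5*M*‖Y τ ω‖^2) ∂P
        = (2*M + 2*M*φτ) + 5*M*φτ := by
      rw [integral_add (integrable_const _) (hY2.const_mul _), integral_const,
        integral_const_mul]
      simp [hφτ]
    calc |∫ ω, (Sig τ ω + 2 * ⟪b τ ω, Y τ ω⟫) ∂P|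
        ≤ ∫ ω, ((2*M + 2*M*φτ) + 5*M*‖Y τ ω‖^2) ∂P := step1.trans step2
      _ = (2*M + 2*M*φτ) + 5*M*φτ := step3
      _ ≤ 2*M + 7*M * φτ := by linarith
  exact main_aux hT hM hM₀ h0 hii habs
end

section
/- Let (Ω, ℱ, P) be a probability space, T, M, C₁ > 0, and let Y : [0,T] × Ω → ℝ^d, Σ : [0,T] × Ω → ℝ, b : [0,T] × Ω → ℝ^d be measurable processes such that t ↦ E‖Y(t)‖² is finite and measurable and: (i) for all 0 ≤ s ≤ t ≤ T, E‖Y(t)‖² = E‖Y(s)‖² + ∫ₛᵗ E[Σ(τ) + 2⟨b(τ), Y(τ)⟩] dτ; (ii) for almost every (τ, ω), |Σ(τ,ω)| ≤ M(1 + ‖Y(τ,ω)‖² + C₁) and ‖b(τ,ω)‖ ≤ M(1 + ‖Y(τ,ω)‖ + C₁^{1/2}). Then there exists a constant C₃ depending only on M, T, C₁ such that for all 0 ≤ s ≤ t ≤ T, E‖Y(t)‖² ≤ C₃(1 + E‖Y(s)‖²). -/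
set_option maxHeartbeats 1000000

open MeasureTheory Set Finset intervalIntegral
open scoped RealInnerProductSpace

/-- Polynomial interval integral. -/
lemma poly_int (s t : ℝ) (k : ℕ) :
    ∫ τ in s..t, (τ - s) ^ k = (t - s) ^ (k + 1) / (k + 1) := by
  have := intervalIntegral.integral_comp_sub_right (fun x => x ^ k) s (a := s) (b := t)
  rw [this, sub_self, integral_pow]
  simp

lemma poly_II (c s t : ℝ) (k : ℕ) :
    IntervalIntegrable (fun τ => c * (τ - s) ^ k) MeasureTheory.volume s t :=
  (continuous_const.mul ((continuous_id.sub continuous_const).pow k)).intervalIntegrable s t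

lemma poly_int' (c s t : ℝ) (k : ℕ) :
    ∫ τ in s..t, c * (τ - s) ^ k = c * ((t - s) ^ (k + 1) / (k + 1)) := by
  rw [intervalIntegral.integral_const_mul, poly_int]

/-- Integral-form Grönwall inequality. -/
lemma gronwall_int_s4 {u : ℝ → ℝ} {s Tend K : ℝ} (hK : 0 ≤ K) (hsT : s ≤ Tend)
    (hu1 : ∀ t, 1 ≤ u t)
    (hInt : IntegrableOn u (Icc s Tend) volume)
    (hIneq : ∀ t ∈ Icc s Tend, u t ≤ u s + ∫ τ in s..t, K * u τ) :
    ∀ t ∈ Icc s Tend, u t ≤ u s * Real.exp (K * (t - s)) := by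
  have hu0 : ∀ t, 0 ≤ u t := fun t => le_trans zero_le_one (hu1 t)
  have hIntKu : IntegrableOn (fun τ => K * u τ) (Icc s Tend) volume := hInt.const_mul K
  have hII : ∀ t₁ t₂, s ≤ t₁ → t₁ ≤ t₂ → t₂ ≤ Tend →
      IntervalIntegrable (fun τ => K * u τ) volume t₁ t₂ := by
    intro t₁ t₂ h1 h2 h3
    have : IntegrableOn (fun τ => K * u τ) (Icc t₁ t₂) volume :=
      hIntKu.mono_set (Icc_subset_Icc h1 h3)
    exact (this.mono_set (by rw [uIcc_of_le h2])).intervalIntegrable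
  set Ub : ℝ := u s + ∫ τ in s..Tend, K * u τ with hUbdef
  have hUb : ∀ t ∈ Icc s Tend, u t ≤ Ub := by
    intro t ht
    refine le_trans (hIneq t ht) ?_
    have hsplit : (∫ τ in s..t, K * u τ) + (∫ τ in t..Tend, K * u τ)
        = ∫ τ in s..Tend, K * u τ :=
      integral_add_adjacent_intervals (hII s t le_rfl ht.1 ht.2) (hII t Tend ht.1 ht.2 le_rfl)
    have hnn : 0 ≤ ∫ τ in t..Tend, K * u τ :=
      intervalIntegral.integral_nonneg ht.2 (fun x _ => mul_nonneg hK (hu0 x))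
    rw [hUbdef]
    linarith
  -- main induction
  have main : ∀ n : ℕ, ∀ t ∈ Icc s Tend,
      u t ≤ u s * (∑ k ∈ range n, (K * (t - s)) ^ k / (k.factorial : ℝ))
            + Ub * ((K * (t - s)) ^ n / (n.factorial : ℝ)) := by
    intro n
    induction n with
    | zero => intro t ht; simpa using hUb t ht
    | succ n IH =>
      intro t ht
      set φ : ℝ → ℝ := fun τ =>
        u s * (∑ k ∈ range n, (K * (τ - s)) ^ k / (k.factorial : ℝ))
          + Ub * ((K * (τ - s)) ^ n / (n.factorial : ℝ)) with hφ
      have hφcont : Continuous φ := by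
        apply Continuous.add
        · exact continuous_const.mul (continuous_finset_sum _ (fun k _ =>
            (((continuous_const.mul (continuous_id.sub continuous_const)).pow k).div_const _)))
        · exact continuous_const.mul
            (((continuous_const.mul (continuous_id.sub continuous_const)).pow n).div_const _)
      have hmono : (∫ τ in s..t, K * u τ) ≤ ∫ τ in s..t, K * φ τ := by
        refine intervalIntegral.integral_mono_on ht.1 (hII s t le_rfl ht.1 ht.2)
          ((continuous_const.mul hφcont).intervalIntegrable s t) ?_
        intro x hx
        exact mul_le_mul_of_nonneg_left (IH x ⟨hx.1, le_trans hx.2 ht.2⟩) hK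
      have hcomp : (∫ τ in s..t, K * φ τ)
          = u s * (∑ k ∈ range n, K^(k+1) * ((t - s) ^ (k+1) / (k+1)) / (k.factorial : ℝ))
            + Ub * (K^(n+1) * ((t - s) ^ (n+1) / (n+1)) / (n.factorial : ℝ)) := by
        have hre : ∀ τ, K * φ τ =
            (∑ k ∈ range n, (u s * K^(k+1) / (k.factorial : ℝ)) * (τ - s) ^ k)
              + (Ub * K^(n+1) / (n.factorial : ℝ)) * (τ - s) ^ n := by
          intro τ
          rw [hφ]
          simp only [mul_pow, Finset.mul_sum]
          rw [mul_add, Finset.mul_sum]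
          congr 1
          · exact Finset.sum_congr rfl (fun k _ => by ring)
          · ring
        simp only [hre]
        have hsII : IntervalIntegrable
            (fun τ => ∑ k ∈ range n, u s * K ^ (k + 1) / (k.factorial : ℝ) * (τ - s) ^ k)
            MeasureTheory.volume s t := by
          have h := IntervalIntegrable.sum (μ := MeasureTheory.volume) (a := s) (b := t) (range n)
            (f := fun k τ => u s * K ^ (k + 1) / (k.factorial : ℝ) * (τ - s) ^ k)
            (fun k _ => poly_II _ s t k)
          have e : (∑ k ∈ range n, fun τ => u s * K ^ (k + 1) / (k.factorial : ℝ) * (τ - s) ^ k)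
              = fun τ => ∑ k ∈ range n, u s * K ^ (k + 1) / (k.factorial : ℝ) * (τ - s) ^ k := by
            funext τ; simp
          rwa [e] at h
        rw [intervalIntegral.integral_add hsII (poly_II _ s t n),
          intervalIntegral.integral_finset_sum (fun k _ => poly_II _ s t k), poly_int']
        have : ∀ k ∈ range n, (∫ τ in s..t, (u s * K^(k+1) / (k.factorial : ℝ)) * (τ - s) ^ k)
            = (u s * K^(k+1) / (k.factorial : ℝ)) * ((t-s)^(k+1)/((k:ℝ)+1)) := by
          intro k _
          rw [poly_int']
          try push_cast
          try ring
        rw [Finset.sum_congr rfl this, Finset.mul_sum]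
        congr 1
        · exact Finset.sum_congr rfl (fun k _ => by push_cast; ring)
        · push_cast; ring
      have step : u t ≤ u s + ∫ τ in s..t, K * φ τ := le_trans (hIneq t ht) (by linarith)
      rw [hcomp] at step
      refine le_trans step (le_of_eq ?_)
      rw [Finset.sum_range_succ' (fun k => (K * (t - s)) ^ k / (k.factorial : ℝ)) n]
      simp only [pow_zero, Nat.factorial_zero, Nat.cast_one]
      rw [mul_add, Finset.mul_sum, Finset.mul_sum]
      have h1 : ∀ k ∈ range n,
          u s * (K ^ (k+1) * ((t - s) ^ (k+1) / ((k:ℝ)+1)) / (k.factorial : ℝ))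
            = u s * ((K * (t - s)) ^ (k+1) / ((k+1).factorial : ℝ)) := by
        intro k _
        rw [Nat.factorial_succ, mul_pow]
        have : ((k:ℝ) + 1) ≠ 0 := by positivity
        have h2 : (k.factorial : ℝ) ≠ 0 := by positivity
        try push_cast
        try field_simp
        try ring
      rw [Finset.sum_congr rfl h1]
      have : ((n:ℝ)+1) ≠ 0 := by positivity
      have h2 : (n.factorial : ℝ) ≠ 0 := by positivity
      rw [Nat.factorial_succ, mul_pow]
      try push_cast
      try field_simp
      try ring
  -- take limits
  intro t ht
  have hx : 0 ≤ K * (t - s) := mul_nonneg hK (by linarith [ht.1])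
  have hseq : ∀ n : ℕ, u t ≤ u s * Real.exp (K * (t - s))
      + Ub * ((K * (t - s)) ^ n / (n.factorial : ℝ)) := by
    intro n
    refine le_trans (main n t ht) ?_
    have := Real.sum_le_exp_of_nonneg hx n
    have hus : 0 ≤ u s := hu0 s
    nlinarith
  have htend : Filter.Tendsto
      (fun n : ℕ => u s * Real.exp (K * (t - s)) + Ub * ((K * (t - s)) ^ n / (n.factorial : ℝ)))
      Filter.atTop (nhds (u s * Real.exp (K * (t - s)))) := by
    have h0 := FloorSemiring.tendsto_pow_div_factorial_atTop (K := ℝ) (K * (t - s))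
    have := Filter.Tendsto.add (tendsto_const_nhds
      (x := u s * Real.exp (K * (t - s))) (f := Filter.atTop)) (h0.const_mul Ub)
    simpa using this
  exact ge_of_tendsto' htend hseq

lemma ptwise_bound (M C₁ S ip y bn : ℝ) (hM : 0 < M) (hC₁ : 0 < C₁) (hy : 0 ≤ y)
    (hS : |S| ≤ M * (1 + y ^ 2 + C₁)) (hbn : bn ≤ M * (1 + y + Real.sqrt C₁))
    (hip : |ip| ≤ bn * y) :
    |S + 2 * ip| ≤ M * (3 * C₁ + 7) * (1 + y ^ 2) := by
  have hsq : Real.sqrt C₁ ≤ 1 + C₁ := by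
    nlinarith [Real.sq_sqrt hC₁.le, Real.sqrt_nonneg C₁, sq_nonneg (Real.sqrt C₁ - 1)]
  have habs : |S + 2 * ip| ≤ |S| + 2 * |ip| := by
    calc |S + 2 * ip| ≤ |S| + |2 * ip| := abs_add_le _ _
    _ = |S| + 2 * |ip| := by rw [abs_mul]; norm_num
  have hip2 : |ip| ≤ M * (1 + y + Real.sqrt C₁) * y :=
    le_trans hip (mul_le_mul_of_nonneg_right hbn hy)
  have h3 : |ip| ≤ M * (2 + C₁) * y + M * y ^ 2 := by
    nlinarith [mul_nonneg (mul_nonneg hM.le hy) (sub_nonneg.mpr hsq)]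
  have h4 : 2 * |ip| ≤ M * (2 + C₁) * (1 + y ^ 2) + 2 * M * y ^ 2 := by
    nlinarith [mul_nonneg (mul_nonneg hM.le (by linarith : (0:ℝ) ≤ 2 + C₁)) (sq_nonneg (y - 1))]
  nlinarith [mul_nonneg hM.le hC₁.le, mul_nonneg (mul_nonneg hM.le hC₁.le) (sq_nonneg y),
    mul_nonneg hM.le (sq_nonneg y)]


/-- Lemma 3 of the paper: conditional second-moment bound for an
admissible process.  There is a constant `C₃` depending only on `M, T, C₁` such that for
any process `Y` whose second moment satisfies the martingale identity (i) with
coefficients bounded as in (ii), one has `E‖Y(t)‖² ≤ C₃(1 + E‖Y(s)‖²)` for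
`0 ≤ s ≤ t ≤ T`. -/
theorem stmt_4 (d : ℕ) (T M C₁ : ℝ) (hT : 0 < T) (hM : 0 < M) (hC₁ : 0 < C₁) :
    ∃ C₃ : ℝ, ∀ (Ω : Type) [MeasurableSpace Ω] (P : Measure Ω)
      [IsProbabilityMeasure P]
      (Y : ℝ → Ω → EuclideanSpace ℝ (Fin d)) (Sig : ℝ → Ω → ℝ)
      (b : ℝ → Ω → EuclideanSpace ℝ (Fin d)),
      Measurable (Function.uncurry Y) → Measurable (Function.uncurry Sig) →
      Measurable (Function.uncurry b) →
      (∀ t ∈ Set.Icc (0:ℝ) T, Integrable (fun ω => ‖Y t ω‖ ^ 2) P) →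
      (Measurable fun t => ∫ ω, ‖Y t ω‖ ^ 2 ∂P) →
      (∀ s t : ℝ, 0 ≤ s → s ≤ t → t ≤ T →
        ∫ ω, ‖Y t ω‖ ^ 2 ∂P
          = (∫ ω, ‖Y s ω‖ ^ 2 ∂P)
            + ∫ τ in s..t, (∫ ω, (Sig τ ω + 2 * ⟪b τ ω, Y τ ω⟫) ∂P)) →
      (∀ᵐ p ∂((volume.restrict (Set.Icc (0:ℝ) T)).prod P),
        |Sig p.1 p.2| ≤ M * (1 + ‖Y p.1 p.2‖ ^ 2 + C₁) ∧
        ‖b p.1 p.2‖ ≤ M * (1 + ‖Y p.1 p.2‖ + Real.sqrt C₁)) →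
      ∀ s t : ℝ, 0 ≤ s → s ≤ t → t ≤ T →
        ∫ ω, ‖Y t ω‖ ^ 2 ∂P ≤ C₃ * (1 + ∫ ω, ‖Y s ω‖ ^ 2 ∂P) := by
  set K := M * (3 * C₁ + 7) with hKdef
  have hK : 0 < K := by positivity
  refine ⟨Real.exp (K * T), ?_⟩
  intro Ω _ P _ Y Sig b hY hSig hb hYint hfMeas hident hbound s t hs hst htT
  set f : ℝ → ℝ := fun τ => ∫ ω, ‖Y τ ω‖ ^ 2 ∂P with hfdef
  set g : ℝ → ℝ := fun τ => ∫ ω, (Sig τ ω + 2 * ⟪b τ ω, Y τ ω⟫) ∂P with hgdef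
  have hfnn : ∀ τ, 0 ≤ f τ := fun τ => integral_nonneg (fun ω => by positivity)
  have hmeasF : Measurable f := hfMeas
  have hident' : ∀ s' t' : ℝ, 0 ≤ s' → s' ≤ t' → t' ≤ T →
      f t' = f s' + ∫ τ in s'..t', g τ := hident
  -- measurability of g
  have hFm : Measurable (fun p : ℝ × Ω => Sig p.1 p.2 + 2 * ⟪b p.1 p.2, Y p.1 p.2⟫) :=
    hSig.add (((hb.inner hY)).const_mul 2)
  have hgsm : StronglyMeasurable g := hFm.stronglyMeasurable.integral_prod_right'
  -- a.e. bound on g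
  have h_ae : ∀ᵐ τ ∂(volume.restrict (Set.Icc (0:ℝ) T)), |g τ| ≤ K * (1 + f τ) := by
    filter_upwards [Measure.ae_ae_of_ae_prod hbound, ae_restrict_mem measurableSet_Icc]
      with τ hae hτ
    have hYi : Integrable (fun ω => ‖Y τ ω‖ ^ 2) P := hYint τ hτ
    have hbd : Integrable (fun ω => K * (1 + ‖Y τ ω‖ ^ 2)) P :=
      ((integrable_const (1:ℝ)).add hYi).const_mul K
    have hptw : ∀ᵐ ω ∂P, |Sig τ ω + 2 * ⟪b τ ω, Y τ ω⟫| ≤ K * (1 + ‖Y τ ω‖ ^ 2) := by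
      filter_upwards [hae] with ω hω
      exact ptwise_bound M C₁ _ _ _ _ hM hC₁ (norm_nonneg _) hω.1 hω.2
        (abs_real_inner_le_norm _ _)
    have hIm : AEStronglyMeasurable (fun ω => Sig τ ω + 2 * ⟪b τ ω, Y τ ω⟫) P :=
      ((hSig.of_uncurry_left).add
        (((hb.of_uncurry_left).inner (hY.of_uncurry_left)).const_mul 2)).aestronglyMeasurable
    have hInt : Integrable (fun ω => Sig τ ω + 2 * ⟪b τ ω, Y τ ω⟫) P :=
      hbd.mono' hIm (by filter_upwards [hptw] with ω h; rwa [Real.norm_eq_abs])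
    have h1 : |g τ| ≤ ∫ ω, |Sig τ ω + 2 * ⟪b τ ω, Y τ ω⟫| ∂P := by
      rw [hgdef]
      simpa [Real.norm_eq_abs] using norm_integral_le_integral_norm
        (fun ω => Sig τ ω + 2 * ⟪b τ ω, Y τ ω⟫) (μ := P)
    have h2 : (∫ ω, |Sig τ ω + 2 * ⟪b τ ω, Y τ ω⟫| ∂P) ≤ ∫ ω, K * (1 + ‖Y τ ω‖ ^ 2) ∂P :=
      integral_mono_ae hInt.abs hbd hptw
    have h3 : (∫ ω, K * (1 + ‖Y τ ω‖ ^ 2) ∂P) = K * (1 + f τ) := by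
      rw [MeasureTheory.integral_const_mul, MeasureTheory.integral_add (integrable_const 1) hYi,
        MeasureTheory.integral_const]
      simp [hfdef]
    linarith
  -- boundedness lemma
  have hbddInt : ∀ s' t', 0 ≤ s' → s' ≤ t' → t' ≤ T → IntervalIntegrable g volume s' t' →
      IntegrableOn f (Set.Icc s' t') volume := by
    intro s' t' h0 h12 h2T hgi
    have habs : IntervalIntegrable (fun τ => |g τ|) volume s' t' := hgi.abs
    set B := f s' + ∫ τ in s'..t', |g τ| with hBdef
    have hfb : ∀ r ∈ Set.Icc s' t', f r ≤ B := by
      intro r hr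
      have hid := hident' s' r h0 hr.1 (hr.2.trans h2T)
      have hgi' : IntervalIntegrable g volume s' r :=
        hgi.mono_set (uIcc_subset_uIcc (left_mem_uIcc)
          (by rw [uIcc_of_le h12]; exact hr))
      have habs' : IntervalIntegrable (fun τ => |g τ|) volume s' r := hgi'.abs
      have habs'' : IntervalIntegrable (fun τ => |g τ|) volume r t' :=
        habs.mono_set (uIcc_subset_uIcc (by rw [uIcc_of_le h12]; exact hr) (right_mem_uIcc))
      have h1 : (∫ τ in s'..r, g τ) ≤ ∫ τ in s'..r, |g τ| :=
        le_trans (le_abs_self _) (intervalIntegral.abs_integral_le_integral_abs hr.1)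
      have hsplit : (∫ τ in s'..r, |g τ|) + (∫ τ in r..t', |g τ|) = ∫ τ in s'..t', |g τ| :=
        integral_add_adjacent_intervals habs' habs''
      have hnn : 0 ≤ ∫ τ in r..t', |g τ| :=
        intervalIntegral.integral_nonneg hr.2 (fun x _ => abs_nonneg _)
      rw [hBdef]
      linarith
    apply Measure.integrableOn_of_bounded (M := B)
    · rw [Real.volume_Icc]; exact ENNReal.ofReal_ne_top
    · exact hmeasF.aestronglyMeasurable
    · filter_upwards [ae_restrict_mem measurableSet_Icc] with r hr
      rw [Real.norm_eq_abs, abs_of_nonneg (hfnn r)]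
      exact hfb r hr
  -- integrability of f on [0, T]
  have hIccInt : IntegrableOn f (Set.Icc 0 T) volume := by
    set A := {r : ℝ | r ∈ Set.Icc (0:ℝ) T ∧ IntegrableOn f (Set.Icc 0 r) volume} with hAdef
    have h0A : (0:ℝ) ∈ A := by
      refine ⟨⟨le_rfl, hT.le⟩, ?_⟩
      rw [Set.Icc_self]
      unfold IntegrableOn
      rw [Measure.restrict_eq_zero.mpr (by simp)]
      exact integrable_zero_measure
    have hAne : A.Nonempty := ⟨0, h0A⟩
    have hAbdd : BddAbove A := ⟨T, fun x hx => hx.1.2⟩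
    set a := sSup A with hadef
    have haT : a ≤ T := csSup_le hAne (fun x hx => hx.1.2)
    have h0a : 0 ≤ a := le_csSup hAbdd h0A
    have haA : IntegrableOn f (Set.Icc 0 a) volume := by
      rcases eq_or_lt_of_le h0a with heq | hlt
      · rw [← heq]; exact h0A.2
      by_cases hcase : ∃ r, 0 ≤ r ∧ r < a ∧ IntervalIntegrable g volume r a
      · obtain ⟨r, hr0, hra, hint⟩ := hcase
        have h1 : IntegrableOn f (Set.Icc r a) volume := hbddInt r a hr0 hra.le haT hint
        obtain ⟨t', ht'A, hrt'⟩ := exists_lt_of_lt_csSup hAne hra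
        have hsub : Set.Icc (0:ℝ) a ⊆ Set.Icc 0 t' ∪ Set.Icc r a := by
          intro x hx
          rcases le_or_gt x t' with h | h
          · exact Or.inl ⟨hx.1, h⟩
          · exact Or.inr ⟨le_of_lt (lt_trans hrt' h), hx.2⟩
        exact (ht'A.2.union h1).mono_set hsub
      · push_neg at hcase
        have hconst : ∀ r, 0 ≤ r → r < a → f r = f a := by
          intro r h0r hra
          have hid := hident' r a h0r hra.le haT
          rw [intervalIntegral.integral_undef (hcase r h0r hra)] at hid
          linarith [hid]
        apply Measure.integrableOn_of_bounded (M := |f a|)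
        · rw [Real.volume_Icc]; exact ENNReal.ofReal_ne_top
        · exact hmeasF.aestronglyMeasurable
        · filter_upwards [ae_restrict_mem measurableSet_Icc] with r hr
          rcases eq_or_lt_of_le hr.2 with heq | hlt'
          · rw [heq, Real.norm_eq_abs]
          · rw [Real.norm_eq_abs, hconst r hr.1 hlt']
    have haTeq : a = T := by
      by_contra hne
      have haltT : a < T := lt_of_le_of_ne haT hne
      by_cases hcase : ∃ r, a < r ∧ r ≤ T ∧ IntervalIntegrable g volume a r
      · obtain ⟨r, har, hrT, hint⟩ := hcase
        have h1 : IntegrableOn f (Set.Icc a r) volume := hbddInt a r h0a har.le hrT hint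
        have hrA : r ∈ A := by
          refine ⟨⟨le_trans h0a har.le, hrT⟩, ?_⟩
          have hsub : Set.Icc (0:ℝ) r ⊆ Set.Icc 0 a ∪ Set.Icc a r := by
            intro x hx
            rcases le_total x a with h | h
            · exact Or.inl ⟨hx.1, h⟩
            · exact Or.inr ⟨h, hx.2⟩
          exact (haA.union h1).mono_set hsub
        exact absurd (le_csSup hAbdd hrA) (not_le.mpr har)
      · push_neg at hcase
        have hconst : ∀ r, a < r → r ≤ T → f r = f a := by
          intro r har hrT
          have hid := hident' a r h0a har.le hrT
          rw [intervalIntegral.integral_undef (hcase r har hrT)] at hid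
          linarith [hid]
        have h1 : IntegrableOn f (Set.Icc a T) volume := by
          apply Measure.integrableOn_of_bounded (M := |f a|)
          · rw [Real.volume_Icc]; exact ENNReal.ofReal_ne_top
          · exact hmeasF.aestronglyMeasurable
          · filter_upwards [ae_restrict_mem measurableSet_Icc] with r hr
            rcases eq_or_lt_of_le hr.1 with heq | hlt'
            · rw [← heq, Real.norm_eq_abs]
            · rw [Real.norm_eq_abs, hconst r hlt' hr.2]
        have hTA : T ∈ A := by
          refine ⟨⟨hT.le, le_rfl⟩, ?_⟩
          have hsub : Set.Icc (0:ℝ) T ⊆ Set.Icc 0 a ∪ Set.Icc a T := by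
            intro x hx
            rcases le_total x a with h | h
            · exact Or.inl ⟨hx.1, h⟩
            · exact Or.inr ⟨h, hx.2⟩
          exact (haA.union h1).mono_set hsub
        exact absurd (le_csSup hAbdd hTA) (not_le.mpr haltT)
    rw [haTeq] at haA
    exact haA
  -- integrability of g and the bound function
  have hfin : IsFiniteMeasure (volume.restrict (Set.Icc (0:ℝ) T)) := by
    constructor
    rw [Measure.restrict_apply_univ, Real.volume_Icc]
    exact ENNReal.ofReal_lt_top
  have hIntBound : IntegrableOn (fun τ => K * (1 + f τ)) (Set.Icc 0 T) volume := by
    have : IntegrableOn (fun τ => (1:ℝ) + f τ) (Set.Icc 0 T) volume :=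
      (integrable_const 1).add hIccInt
    exact this.const_mul K
  have hgInt : IntegrableOn g (Set.Icc 0 T) volume :=
    hIntBound.mono' hgsm.aestronglyMeasurable.restrict
      (by filter_upwards [h_ae] with τ h; rwa [Real.norm_eq_abs])
  have hgII : ∀ s' t', 0 ≤ s' → s' ≤ t' → t' ≤ T → IntervalIntegrable g volume s' t' := by
    intro s' t' h0 h12 h2T
    have : IntegrableOn g (Set.Icc s' t') volume := hgInt.mono_set (Icc_subset_Icc h0 h2T)
    exact (this.mono_set (by rw [uIcc_of_le h12])).intervalIntegrable
  have hKuII : ∀ s' t', 0 ≤ s' → s' ≤ t' → t' ≤ T →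
      IntervalIntegrable (fun τ => K * (1 + f τ)) volume s' t' := by
    intro s' t' h0 h12 h2T
    have : IntegrableOn (fun τ => K * (1 + f τ)) (Set.Icc s' t') volume :=
      hIntBound.mono_set (Icc_subset_Icc h0 h2T)
    exact (this.mono_set (by rw [uIcc_of_le h12])).intervalIntegrable
  -- Grönwall
  set u : ℝ → ℝ := fun τ => 1 + f τ with hudef
  have hu1 : ∀ τ, 1 ≤ u τ := fun τ => by simp [hudef]; linarith [hfnn τ]
  have hIntu : IntegrableOn u (Set.Icc s T) volume :=
    (integrable_const 1).add (hIccInt.mono_set (Icc_subset_Icc hs le_rfl))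
  have hIneq : ∀ t' ∈ Set.Icc s T, u t' ≤ u s + ∫ τ in s..t', K * u τ := by
    intro t' ht'
    have hid := hident' s t' hs ht'.1 ht'.2
    have haesub : ∀ᵐ τ ∂(volume.restrict (Set.Icc s t')), g τ ≤ K * u τ := by
      have h' := ae_restrict_of_ae_restrict_of_subset
        (Set.Icc_subset_Icc hs ht'.2 : Set.Icc s t' ⊆ Set.Icc 0 T) h_ae
      filter_upwards [h'] with τ h
      have h2 := le_trans (le_abs_self _) h
      simpa [hudef] using h2
    have hm : (∫ τ in s..t', g τ) ≤ ∫ τ in s..t', K * u τ := by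
      refine intervalIntegral.integral_mono_ae_restrict ht'.1
        (hgII s t' hs ht'.1 ht'.2) ?_ haesub
      exact hKuII s t' hs ht'.1 ht'.2
    simp only [hudef]
    linarith
  have hconc := gronwall_int_s4 hK.le (hst.trans htT) hu1 hIntu hIneq t ⟨hst, htT⟩
  have hexp : Real.exp (K * (t - s)) ≤ Real.exp (K * T) := by
    apply Real.exp_le_exp.mpr
    have : t - s ≤ T := by linarith
    nlinarith
  have hups : 0 < u s := lt_of_lt_of_le one_pos (hu1 s)
  have : u t ≤ u s * Real.exp (K * T) :=
    le_trans hconc (mul_le_mul_of_nonneg_left hexp hups.le)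
  have hut : u t = 1 + f t := rfl
  have hus : u s = 1 + f s := rfl
  have hexppos : 0 < Real.exp (K * T) := Real.exp_pos _
  show f t ≤ Real.exp (K * T) * (1 + f s)
  nlinarith [hfnn s]
end

section
/- Let (Ω, ℱ, P) be a probability space, T, M, C₁ > 0, 0 < ε ≤ 1, and let Y : [0,T] × Ω → ℝ^d, Σ : [0,T] × Ω → ℝ, b : [0,T] × Ω → ℝ^d be measurable processes such that: (i) for all 0 ≤ s ≤ t ≤ T, E‖Y(t) − Y(s)‖² = ∫ₛᵗ E[Σ(τ) + 2⟨b(τ), Y(τ) − Y(s)⟩] dτ; (ii) E‖Y(τ)‖² ≤ C₁ for all τ; (iii) for almost every (τ,ω), |Σ(τ,ω)| ≤ ε(1 + ‖Y(τ,ω)‖² + C₁) and ‖b(τ,ω)‖ ≤ M(1 + ‖Y(τ,ω)‖ + C₁^{1/2}). Then there exist constants a and c depending only on M, T, C₁ such that for all 0 ≤ s ≤ t ≤ T, E‖Y(t) − Y(s)‖² ≤ ε a (t − s) + c (t − s)^{3/2}. -/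
set_option maxHeartbeats 1000000


open MeasureTheory
open scoped RealInnerProductSpace

/-- time-increment estimate for the admissible process `Y` (inequality (25)
in the proof of Lemma 5 of the paper).  There are constants `a, c` depending only on
`M, T, C₁` such that for any `0 < ε ≤ 1` and any process satisfying (i)–(iii),
`E‖Y(t) − Y(s)‖² ≤ ε a (t−s) + c (t−s)^{3/2}` for all `0 ≤ s ≤ t ≤ T`. -/
theorem stmt_6 (d : ℕ) (T M C₁ : ℝ) (hT : 0 < T) (hM : 0 < M) (hC₁ : 0 < C₁) :
    ∃ a c : ℝ, ∀ (ε : ℝ), 0 < ε → ε ≤ 1 →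
      ∀ (Ω : Type) [MeasurableSpace Ω] (P : Measure Ω)
        [IsProbabilityMeasure P]
        (Y : ℝ → Ω → EuclideanSpace ℝ (Fin d)) (Sig : ℝ → Ω → ℝ)
        (b : ℝ → Ω → EuclideanSpace ℝ (Fin d)),
        Measurable (Function.uncurry Y) → Measurable (Function.uncurry Sig) →
        Measurable (Function.uncurry b) →
        -- (i)
        (∀ s t : ℝ, 0 ≤ s → s ≤ t → t ≤ T →
          ∫ ω, ‖Y t ω - Y s ω‖ ^ 2 ∂P
            = ∫ τ in s..t, (∫ ω, (Sig τ ω + 2 * ⟪b τ ω, Y τ ω - Y s ω⟫) ∂P)) →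
        -- (ii)
        (∀ τ ∈ Set.Icc (0:ℝ) T, Integrable (fun ω => ‖Y τ ω‖ ^ 2) P ∧
          ∫ ω, ‖Y τ ω‖ ^ 2 ∂P ≤ C₁) →
        -- (iii)
        (∀ᵐ p ∂((volume.restrict (Set.Icc (0:ℝ) T)).prod P),
          |Sig p.1 p.2| ≤ ε * (1 + ‖Y p.1 p.2‖ ^ 2 + C₁) ∧
          ‖b p.1 p.2‖ ≤ M * (1 + ‖Y p.1 p.2‖ + Real.sqrt C₁)) →
        ∀ s t : ℝ, 0 ≤ s → s ≤ t → t ≤ T →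
          ∫ ω, ‖Y t ω - Y s ω‖ ^ 2 ∂P
            ≤ ε * a * (t - s) + c * ((t - s) * Real.sqrt (t - s)) := by
  refine ⟨1 + 2*C₁, 3*M^2*(1+2*C₁) + ((1 + 2*C₁) + 3*M^2*(1+2*C₁) + 4*C₁)/2, ?_⟩
  intro ε hε hε1 Ω _ P _ Y Sig b hY hSig hb hi hii hiii s t hs hst htT
  set A : ℝ := 1 + 2*C₁ with hA
  set B : ℝ := 3*M^2*(1+2*C₁) with hB
  set K : ℝ := A + B + 4*C₁ with hK
  have hA0 : 0 < A := by rw [hA]; positivity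
  have hB0 : 0 < B := by rw [hB]; positivity
  have hK0 : 0 < K := by rw [hK]; positivity
  have hsT : s ∈ Set.Icc (0:ℝ) T := ⟨hs, hst.trans htT⟩
  set g : ℝ → ℝ := fun τ => ∫ ω, (Sig τ ω + 2 * ⟪b τ ω, Y τ ω - Y s ω⟫) ∂P with hg
  set F : ℝ → ℝ := fun u => ∫ ω, ‖Y u ω - Y s ω‖ ^ 2 ∂P with hF
  have hi' : ∀ u, s ≤ u → u ≤ t → F u = ∫ τ in s..u, g τ := fun u h1 h2 =>
    hi s u hs h1 (h2.trans htT)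
  have hF0 : ∀ u, 0 ≤ F u := fun u => integral_nonneg (fun ω => by positivity)
  -- integrability of the squared increment
  have hsum : ∀ τ ∈ Set.Icc (0:ℝ) T,
      Integrable (fun ω => 2*‖Y τ ω‖^2 + 2*‖Y s ω‖^2) P := fun τ hτ =>
    ((hii τ hτ).1.const_mul 2).add ((hii s hsT).1.const_mul 2)
  have hΔI : ∀ τ ∈ Set.Icc (0:ℝ) T, Integrable (fun ω => ‖Y τ ω - Y s ω‖ ^ 2) P := by
    intro τ hτ
    have hmτ : Measurable (Y τ) := hY.of_uncurry_left
    have hms : Measurable (Y s) := hY.of_uncurry_left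
    refine Integrable.mono' (hsum τ hτ)
      (((hmτ.sub hms).norm.pow_const 2).aestronglyMeasurable) (ae_of_all _ fun ω => ?_)
    have h1 := norm_sub_le (Y τ ω) (Y s ω)
    have h2 := norm_nonneg (Y τ ω)
    have h3 := norm_nonneg (Y s ω)
    rw [Real.norm_eq_abs, abs_of_nonneg (by positivity)]
    nlinarith [pow_le_pow_left₀ (norm_nonneg (Y τ ω - Y s ω)) h1 2,
      sq_nonneg (‖Y τ ω‖ - ‖Y s ω‖)]
  have hFle : ∀ τ ∈ Set.Icc (0:ℝ) T, F τ ≤ 4*C₁ := by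
    intro τ hτ
    have h : F τ ≤ ∫ ω, (2*‖Y τ ω‖^2 + 2*‖Y s ω‖^2) ∂P := by
      refine integral_mono_ae (hΔI τ hτ) (hsum τ hτ) (ae_of_all _ (fun ω => ?_))
      have h1 := norm_sub_le (Y τ ω) (Y s ω)
      have h2 := norm_nonneg (Y τ ω)
      have h3 := norm_nonneg (Y s ω)
      show ‖Y τ ω - Y s ω‖ ^ 2 ≤ 2*‖Y τ ω‖^2 + 2*‖Y s ω‖^2
      nlinarith [pow_le_pow_left₀ (norm_nonneg (Y τ ω - Y s ω)) h1 2,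
        sq_nonneg (‖Y τ ω‖ - ‖Y s ω‖)]
    rw [integral_add ((hii τ hτ).1.const_mul 2) ((hii s hsT).1.const_mul 2),
      integral_const_mul, integral_const_mul] at h
    have := (hii τ hτ).2
    have := (hii s hsT).2
    linarith
  -- the key a.e. bound on g
  have hgb : ∀ lam mu : ℝ, 0 < lam → 0 ≤ mu → lam * mu = 1 →
      ∀ᵐ τ ∂(volume.restrict (Set.Icc s t)), g τ ≤ ε*A + B*mu + lam * F τ := by
    intro lam mu hlam hmu hlm
    have hsub : Set.Icc s t ⊆ Set.Icc 0 T := Set.Icc_subset_Icc hs htT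
    have hfub := Measure.ae_ae_of_ae_prod hiii
    have hfub' := ae_restrict_of_ae_restrict_of_subset hsub hfub
    filter_upwards [hfub', ae_restrict_mem measurableSet_Icc] with τ hτ hτmem
    have hτT : τ ∈ Set.Icc 0 T := hsub hτmem
    obtain ⟨hYτI, hYτE⟩ := hii τ hτT
    have he : Integrable (fun ω => 1 + ‖Y τ ω‖^2 + C₁) P :=
      ((integrable_const 1).add hYτI).add (integrable_const C₁)
    have hΔI' := hΔI τ hτT
    have hH : Integrable (fun ω =>
        ε*(1+‖Y τ ω‖^2+C₁) + 3*M^2*mu*(1+‖Y τ ω‖^2+C₁) + lam*‖Y τ ω - Y s ω‖^2) P :=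
      ((he.const_mul ε).add (he.const_mul (3*M^2*mu))).add (hΔI'.const_mul lam)
    have hpt : ∀ᵐ ω ∂P, Sig τ ω + 2*⟪b τ ω, Y τ ω - Y s ω⟫ ≤
        ε*(1+‖Y τ ω‖^2+C₁) + 3*M^2*mu*(1+‖Y τ ω‖^2+C₁) + lam*‖Y τ ω - Y s ω‖^2 := by
      filter_upwards [hτ] with ω hω
      obtain ⟨hS, hbb⟩ := hω
      have hin : ⟪b τ ω, Y τ ω - Y s ω⟫ ≤ ‖b τ ω‖ * ‖Y τ ω - Y s ω‖ := real_inner_le_norm _ _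
      have hb0 : (0:ℝ) ≤ ‖b τ ω‖ := norm_nonneg _
      have hy : (0:ℝ) ≤ ‖Y τ ω‖ := norm_nonneg _
      have hd : (0:ℝ) ≤ ‖Y τ ω - Y s ω‖ := norm_nonneg _
      have hr : Real.sqrt C₁ ^ 2 = C₁ := Real.sq_sqrt hC₁.le
      have hrn : (0:ℝ) ≤ Real.sqrt C₁ := Real.sqrt_nonneg _
      have hb2 : ‖b τ ω‖^2 ≤ 3*M^2*(1+‖Y τ ω‖^2+C₁) := by
        have h2 : (1 + ‖Y τ ω‖ + Real.sqrt C₁)^2 ≤ 3*(1 + ‖Y τ ω‖^2 + C₁) := by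
          nlinarith [sq_nonneg (1 - ‖Y τ ω‖), sq_nonneg (1 - Real.sqrt C₁),
            sq_nonneg (‖Y τ ω‖ - Real.sqrt C₁)]
        calc ‖b τ ω‖^2 ≤ (M * (1 + ‖Y τ ω‖ + Real.sqrt C₁))^2 := by
              exact pow_le_pow_left₀ hb0 hbb 2
          _ = M^2 * (1 + ‖Y τ ω‖ + Real.sqrt C₁)^2 := by ring
          _ ≤ M^2 * (3*(1 + ‖Y τ ω‖^2 + C₁)) :=
              mul_le_mul_of_nonneg_left h2 (sq_nonneg M)
          _ = 3*M^2*(1+‖Y τ ω‖^2+C₁) := by ring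
      have key : 2*(‖b τ ω‖*‖Y τ ω - Y s ω‖) ≤ mu*‖b τ ω‖^2 + lam*‖Y τ ω - Y s ω‖^2 := by
        have h := mul_nonneg hmu (sq_nonneg (‖b τ ω‖ - lam*‖Y τ ω - Y s ω‖))
        have hexp : mu*(‖b τ ω‖ - lam*‖Y τ ω - Y s ω‖)^2
            = mu*‖b τ ω‖^2 - 2*(lam*mu)*(‖b τ ω‖*‖Y τ ω - Y s ω‖)
              + (lam*mu)*(lam*‖Y τ ω - Y s ω‖^2) := by ring
        rw [hlm] at hexp
        linarith [hexp ▸ h]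
      have hSle : Sig τ ω ≤ ε*(1+‖Y τ ω‖^2+C₁) := le_trans (le_abs_self _) hS
      have h6 : mu*‖b τ ω‖^2 ≤ 3*M^2*mu*(1+‖Y τ ω‖^2+C₁) := by
        have := mul_le_mul_of_nonneg_left hb2 hmu
        linarith [this]
      have h7 : 2*⟪b τ ω, Y τ ω - Y s ω⟫ ≤ 2*(‖b τ ω‖*‖Y τ ω - Y s ω‖) := by
        nlinarith [hin]
      linarith [key, h6, h7, hSle]
    by_cases hint : Integrable (fun ω => Sig τ ω + 2*⟪b τ ω, Y τ ω - Y s ω⟫) P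
    · have h1 : g τ ≤ ∫ ω, (ε*(1+‖Y τ ω‖^2+C₁) + 3*M^2*mu*(1+‖Y τ ω‖^2+C₁)
          + lam*‖Y τ ω - Y s ω‖^2) ∂P := integral_mono_ae hint hH hpt
      have hf1 : Integrable (fun ω => ε*(1+‖Y τ ω‖^2+C₁)
          + 3*M^2*mu*(1+‖Y τ ω‖^2+C₁)) P := (he.const_mul ε).add (he.const_mul (3*M^2*mu))
      have h2 : ∫ ω, (ε*(1+‖Y τ ω‖^2+C₁) + 3*M^2*mu*(1+‖Y τ ω‖^2+C₁)
          + lam*‖Y τ ω - Y s ω‖^2) ∂P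
          = ε*(∫ ω, (1+‖Y τ ω‖^2+C₁) ∂P) + 3*M^2*mu*(∫ ω, (1+‖Y τ ω‖^2+C₁) ∂P)
            + lam*(F τ) := by
        rw [integral_add hf1 (hΔI'.const_mul lam),
          integral_add (he.const_mul ε) (he.const_mul (3*M^2*mu)),
          integral_const_mul, integral_const_mul, integral_const_mul]
      have he1 : Integrable (fun ω => 1 + ‖Y τ ω‖^2) P := (integrable_const 1).add hYτI
      have h3 : ∫ ω, (1+‖Y τ ω‖^2+C₁) ∂P ≤ A := by
        rw [integral_add he1 (integrable_const C₁),
          integral_add (integrable_const 1) hYτI, integral_const, integral_const]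
        simp only [measure_univ, probReal_univ, ENNReal.toReal_one, smul_eq_mul, one_mul, hA]
        linarith
      have h4 : (0:ℝ) ≤ ∫ ω, (1+‖Y τ ω‖^2+C₁) ∂P :=
        integral_nonneg (fun ω => by positivity)
      have h5 := hF0 τ
      rw [h2] at h1
      have hBeq : B = 3*M^2*A := by rw [hB, hA]
      nlinarith [mul_nonneg hmu (sub_nonneg.mpr h3), sq_nonneg M]
    · have hz : g τ = 0 := integral_undef hint
      rw [hz]
      have := hF0 τ
      nlinarith [mul_nonneg hB0.le hmu, mul_nonneg hlam.le (hF0 τ)]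
  -- pass 1: linear bound
  have pass1 : ∀ u, s ≤ u → u ≤ t → F u ≤ K * (u - s) := by
    intro u h1 h2
    by_cases hint : IntervalIntegrable g volume s u
    · rw [hi' u h1 h2]
      have hmono : g ≤ᵐ[volume.restrict (Set.Icc s u)] fun _ => K := by
        have hb1 := hgb 1 1 one_pos zero_le_one (by ring)
        have hb1' := ae_restrict_of_ae_restrict_of_subset
          (Set.Icc_subset_Icc le_rfl h2) hb1
        filter_upwards [hb1', ae_restrict_mem measurableSet_Icc] with τ hτ hτmem
        have hτT : τ ∈ Set.Icc (0:ℝ) T := ⟨hs.trans hτmem.1, hτmem.2.trans (h2.trans htT)⟩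
        have := hFle τ hτT
        rw [hK]
        have hεA : ε * A ≤ 1 * A := mul_le_mul_of_nonneg_right hε1 hA0.le
        linarith
      calc ∫ τ in s..u, g τ ≤ ∫ τ in s..u, (K : ℝ) :=
            intervalIntegral.integral_mono_ae_restrict h1 hint intervalIntegrable_const hmono
        _ = K * (u - s) := by rw [intervalIntegral.integral_const, smul_eq_mul]; ring
    · rw [hi' u h1 h2, intervalIntegral.integral_undef hint]
      nlinarith [mul_nonneg hK0.le (sub_nonneg.mpr h1)]
  -- conclude
  show F t ≤ ε * A * (t - s) + (B + K / 2) * ((t - s) * Real.sqrt (t - s))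
  rcases eq_or_lt_of_le hst with heq | hlt
  · subst heq
    simp [hF]
  · set r : ℝ := Real.sqrt (t - s) with hrdef
    have hts : (0:ℝ) < t - s := by linarith
    have hr0 : 0 < r := Real.sqrt_pos.mpr hts
    have hrr : r * r = t - s := Real.mul_self_sqrt hts.le
    have hlm : r⁻¹ * r = 1 := inv_mul_cancel₀ hr0.ne'
    by_cases hint : IntervalIntegrable g volume s t
    · have hmono : g ≤ᵐ[volume.restrict (Set.Icc s t)]
          fun τ => ε*A + B*r + r⁻¹*(K*(τ - s)) := by
        have hb1 := hgb r⁻¹ r (by positivity) hr0.le hlm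
        filter_upwards [hb1, ae_restrict_mem measurableSet_Icc] with τ hτ hτmem
        have := pass1 τ hτmem.1 hτmem.2
        have hrpos : (0:ℝ) < r⁻¹ := by positivity
        nlinarith [mul_le_mul_of_nonneg_left this hrpos.le]
      have hψint : IntervalIntegrable (fun τ => ε*A + B*r + r⁻¹*(K*(τ - s))) volume s t :=
        (Continuous.intervalIntegrable (by continuity) s t)
      have hFt : F t ≤ ∫ τ in s..t, (ε*A + B*r + r⁻¹*(K*(τ - s))) := by
        rw [hi' t hst le_rfl]
        exact intervalIntegral.integral_mono_ae_restrict hst hint hψint hmono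
      have hcomp : (∫ τ in s..t, (ε*A + B*r + r⁻¹*(K*(τ - s))))
          = (ε*A + B*r)*(t-s) + r⁻¹*K*((t-s)^2/2) := by
        have hfun : (fun τ => ε*A + B*r + r⁻¹*(K*(τ - s)))
            = fun τ => (ε*A + B*r - r⁻¹*K*s) + r⁻¹*K*τ := by funext τ; ring
        rw [hfun, intervalIntegral.integral_add intervalIntegrable_const
            (Continuous.intervalIntegrable (by continuity) s t),
          intervalIntegral.integral_const, intervalIntegral.integral_const_mul,
          show (∫ x in s..t, (x:ℝ)) = (t^2-s^2)/2 from by simp, smul_eq_mul]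
        ring
      rw [hcomp] at hFt
      refine hFt.trans (le_of_eq ?_)
      rw [← hrr]
      field_simp
      ring
    · rw [hi' t hst le_rfl, intervalIntegral.integral_undef hint]
      have h1 : 0 ≤ ε * A * (t - s) := by positivity
      have h2 : (0:ℝ) ≤ (B + K / 2) * ((t - s) * r) :=
        mul_nonneg (by linarith) (mul_nonneg hts.le (Real.sqrt_nonneg _))
      exact add_nonneg h1 h2
end

section
/- Let T, K, M, R, C₂ > 0, D ≥ 0, and let κ : [0,∞) → [0,∞) be increasing. Let (P, dist) be a metric space with ς : P → [0,∞), let U be a set, and let f : [0,T] × ℝ^d × P × U → ℝ^d, g : [0,T] × ℝ^d × P × U → ℝ, σ : ℝ^d × P → ℝ satisfy: (A3) ‖f(t,x',p',u) − f(t,x'',p'',u)‖ ≤ K(‖x' − x''‖ + dist(p',p'')); (A4) ‖f(t,x,p,u)‖ ≤ M(1 + ‖x‖ + ς(p)) and |g(t,x,p,u)| ≤ M(1 + ‖x‖ + κ(ς(p))); (A5) |σ(x',p') − σ(x'',p'')| ≤ R(‖x' − x''‖ + dist(p',p''))(1 + ‖x'‖ + ‖x''‖ + κ(ς(p')) + κ(ς(p'')))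 and the same Lipschitz-with-growth bound for g(t,·,·,u). Let μ₁, μ₂ : [0,T] → P be flows with ς(μᵢ[t])² ≤ C₂ for all t and dist(μ₁[t], μ₂[t]) ≤ D for all t. For a measurable control v : [0,T] → U and (s,ξ) ∈ [0,T] × ℝ^d, let x[·, μᵢ, s, ξ, v] denote the solution of ẋ(t) = f(t, x(t), μᵢ[t], v(t)), x(s) = ξ, and z[T, μᵢ, s, ξ, v] = ∫ₛᵀ g(τ, x[τ, μᵢ, s, ξ, v], μᵢ[τ], v(τ)) dτ, and define V(s, ξ; μᵢ) = sup over measurable controls v of [σ(x[T, μᵢ, s, ξ, v], μᵢ[T]) + z[T, μᵢ, s, ξ, v]]. Then there exists a constant c depending only on K, M, R, T, κ, C₂ such that for every (s,ξ), |V(s, ξ; μ₁) − V(s, ξ; μ₂)| ≤ c (1 + ‖ξ‖) D. -/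
open MeasureTheory Set intervalIntegral

open MeasureTheory Set intervalIntegral

/-- Integral-form Grönwall inequality. -/
lemma my_gronwall_integral {s T a b : ℝ} (hsT : s ≤ T) (hs : 0 ≤ s) (ha : 0 ≤ a) (hb : 0 < b)
    (φ : ℝ → ℝ) (hcont : ContinuousOn φ (Set.Icc s T))
    (hpos : ∀ t ∈ Set.Icc s T, 0 ≤ φ t)
    (hineq : ∀ t ∈ Set.Icc s T, φ t ≤ a + b * ∫ τ in s..t, φ τ) :
    ∀ t ∈ Set.Icc s T, φ t ≤ a * Real.exp (b * T) := by
  set proj : ℝ → ℝ := fun t => max s (min t T) with hprojdef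
  have hproj : ∀ t, proj t ∈ Set.Icc s T := by
    intro t
    constructor
    · exact le_max_left _ _
    · exact max_le hsT (min_le_right _ _)
  have hprojc : Continuous proj := by
    apply Continuous.max continuous_const
    exact Continuous.min continuous_id continuous_const
  set φ' : ℝ → ℝ := fun t => φ (proj t) with hφ'def
  have φc : Continuous φ' := hcont.comp_continuous hprojc hproj
  have hEq : ∀ t ∈ Set.Icc s T, φ' t = φ t := by
    intro t ht
    simp only [hφ'def, hprojdef]
    rw [min_eq_left ht.2, max_eq_right ht.1]
  have hInt : ∀ t : ℝ, IntervalIntegrable φ' volume s t := fun t =>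
    φc.intervalIntegrable s t
  set ψ : ℝ → ℝ := fun t => ∫ τ in s..t, φ' τ with hψdef
  have hψd : ∀ t : ℝ, HasDerivAt ψ (φ' t) t := fun t =>
    integral_hasDerivAt_right (hInt t) (φc.stronglyMeasurableAtFilter _ _) φc.continuousAt
  have hψ0 : ∀ t, 0 ≤ φ' t := fun t => hpos _ (hproj t)
  have hψnonneg : ∀ t ∈ Set.Icc s T, 0 ≤ ψ t := by
    intro t ht
    exact intervalIntegral.integral_nonneg ht.1 (fun τ _ => hψ0 τ)
  have hgr : ∀ t ∈ Set.Icc s T, ‖ψ t‖ ≤ gronwallBound 0 b a (t - s) := by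
    apply norm_le_gronwallBound_of_norm_deriv_right_le
    · exact fun t _ => ((hψd t).continuousAt.continuousWithinAt)
    · exact fun t _ => (hψd t).hasDerivWithinAt
    · simp [hψdef]
    · intro t ht
      have ht' : t ∈ Set.Icc s T := ⟨ht.1, ht.2.le⟩
      rw [Real.norm_of_nonneg (hψ0 t), Real.norm_of_nonneg (hψnonneg t ht')]
      have : (∫ τ in s..t, φ τ) = ψ t := by
        apply intervalIntegral.integral_congr
        intro τ hτ
        rw [Set.uIcc_of_le ht.1] at hτ
        exact (hEq τ ⟨hτ.1, hτ.2.trans ht'.2⟩).symm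
      have h1 := hineq t ht'
      rw [this] at h1
      rw [hEq t ht']
      linarith
  intro t ht
  have h1 := hineq t ht
  have h2 := hgr t ht
  rw [Real.norm_of_nonneg (hψnonneg t ht)] at h2
  rw [gronwallBound_of_K_ne_0 hb.ne'] at h2
  have : (∫ τ in s..t, φ τ) = ψ t := by
    apply intervalIntegral.integral_congr
    intro τ hτ
    rw [Set.uIcc_of_le ht.1] at hτ
    exact (hEq τ ⟨hτ.1, hτ.2.trans ht.2⟩).symm
  rw [this] at h1
  have hts : t - s ≤ T := by linarith [ht.1, ht.2, hs]
  have hexp : Real.exp (b * (t - s)) ≤ Real.exp (b * T) :=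
    Real.exp_le_exp.2 (by nlinarith)
  have hb' : b ≠ 0 := hb.ne'
  calc φ t ≤ a + b * ψ t := h1
    _ ≤ a + b * (0 * Real.exp (b * (t - s)) + a / b * (Real.exp (b * (t - s)) - 1)) := by
        nlinarith [h2]
    _ = a * Real.exp (b * (t - s)) := by field_simp; ring
    _ ≤ a * Real.exp (b * T) := by nlinarith [Real.exp_pos (b * (t - s))]

/-- Continuity of a solution of the integral equation. -/
lemma my_sol_cont {E : Type*} [NormedAddCommGroup E] [NormedSpace ℝ E] {s T : ℝ}
    (hsT : s ≤ T) (ξ : E) {F : ℝ → E} {x : ℝ → E}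
    (hF : IntervalIntegrable F volume s T)
    (hx : ∀ t ∈ Set.Icc s T, x t = ξ + ∫ τ in s..t, F τ) :
    ContinuousOn x (Set.Icc s T) := by
  have h : ContinuousOn (fun t => ξ + ∫ τ in s..t, F τ) (Set.uIcc s T) :=
    continuousOn_const.add (continuousOn_primitive_interval' hF Set.left_mem_uIcc)
  rw [Set.uIcc_of_le hsT] at h
  exact h.congr hx

/-- A priori bound via Grönwall for a solution of an integral equation. -/
lemma my_sol_bound {E : Type*} [NormedAddCommGroup E] [NormedSpace ℝ E] {s T b C : ℝ}
    (hs : 0 ≤ s) (hsT : s ≤ T) (hb : 0 < b) (hC : 0 ≤ C)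
    (ξ : E) (F : ℝ → E) (x : ℝ → E)
    (hF : IntervalIntegrable F volume s T)
    (hx : ∀ t ∈ Set.Icc s T, x t = ξ + ∫ τ in s..t, F τ)
    (hFb : ∀ τ ∈ Set.Icc s T, ‖F τ‖ ≤ b * ‖x τ‖ + C) :
    ∀ t ∈ Set.Icc s T, ‖x t‖ ≤ (‖ξ‖ + C * T) * Real.exp (b * T) := by
  have hT0 : 0 ≤ T := hs.trans hsT
  have hxc : ContinuousOn x (Set.Icc s T) := my_sol_cont hsT ξ hF hx
  have ha : (0:ℝ) ≤ ‖ξ‖ + C * T := by positivity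
  apply my_gronwall_integral hsT hs ha hb _ hxc.norm (fun t _ => norm_nonneg _)
  intro t ht
  have hsub : Set.Icc s t ⊆ Set.Icc s T := Set.Icc_subset_Icc_right ht.2
  have hsub' : Set.uIcc s t ⊆ Set.uIcc s T := by
    rw [Set.uIcc_of_le ht.1, Set.uIcc_of_le hsT]; exact hsub
  have hFi : IntervalIntegrable (fun τ => ‖F τ‖) volume s t := (hF.mono_set hsub').norm
  have hrhsc : ContinuousOn (fun τ => b * ‖x τ‖ + C) (Set.uIcc s t) := by
    rw [Set.uIcc_of_le ht.1]
    exact (continuousOn_const.mul ((hxc.mono hsub).norm)).add continuousOn_const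
  have hrhsi : IntervalIntegrable (fun τ => b * ‖x τ‖ + C) volume s t :=
    hrhsc.intervalIntegrable
  have h1 : ‖x t‖ ≤ ‖ξ‖ + ∫ τ in s..t, ‖F τ‖ := by
    rw [hx t ht]
    exact (norm_add_le _ _).trans (by
      gcongr
      exact intervalIntegral.norm_integral_le_integral_norm ht.1)
  have h2 : (∫ τ in s..t, ‖F τ‖) ≤ ∫ τ in s..t, (b * ‖x τ‖ + C) :=
    intervalIntegral.integral_mono_on ht.1 hFi hrhsi (fun τ hτ => hFb τ (hsub hτ))
  have hxi : IntervalIntegrable (fun τ => ‖x τ‖) volume s t := by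
    apply ContinuousOn.intervalIntegrable
    rw [Set.uIcc_of_le ht.1]
    exact (hxc.mono hsub).norm
  have h3 : (∫ τ in s..t, (b * ‖x τ‖ + C)) = b * (∫ τ in s..t, ‖x τ‖) + C * (t - s) := by
    rw [intervalIntegral.integral_add (hxi.const_mul b) intervalIntegrable_const,
      intervalIntegral.integral_const_mul, intervalIntegral.integral_const]
    simp [mul_comm]
  have h4 : C * (t - s) ≤ C * T := by nlinarith [ht.1, ht.2]
  calc ‖x t‖ ≤ ‖ξ‖ + (b * (∫ τ in s..t, ‖x τ‖) + C * (t - s)) := by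
        rw [← h3]; linarith
    _ ≤ ‖ξ‖ + C * T + b * ∫ τ in s..t, ‖x τ‖ := by linarith

set_option maxHeartbeats 4000000 in
/-- value-function stability (estimate (33) in the proof of Theorem 1 of
the paper).  The value `V(s,ξ;μ)` of the deterministic optimal control problem (the
supremum over measurable controls `v`, with `x[·,μ,s,ξ,v]` the solution of
`ẋ = f(t,x,μ[t],v(t))`, `x(s) = ξ`, of `σ(x(T),μ[T]) + ∫ₛᵀ g`) depends
Lipschitz-continuously on the flow `μ`: there is a constant `c` depending only on
`K, M, R, T, κ, C₂` with `|V(s,ξ;μ₁) − V(s,ξ;μ₂)| ≤ c(1+‖ξ‖)D` whenever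
`dist(μ₁[t],μ₂[t]) ≤ D` for all `t`. -/
theorem stmt_13 (d : ℕ) (T K M R C₂ : ℝ) (hT : 0 < T) (hK : 0 < K) (hM : 0 < M)
    (hR : 0 < R) (hC₂ : 0 < C₂) (κ : ℝ → ℝ)
    (hκ0 : ∀ r : ℝ, 0 ≤ r → 0 ≤ κ r)
    (hκmono : ∀ a b : ℝ, 0 ≤ a → a ≤ b → κ a ≤ κ b) :
    ∃ c : ℝ, ∀ (D : ℝ), 0 ≤ D →
      ∀ (S : Type) [MetricSpace S] (ς : S → ℝ) (U : Type) [MeasurableSpace U]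
        (f : ℝ → EuclideanSpace ℝ (Fin d) → S → U → EuclideanSpace ℝ (Fin d))
        (g : ℝ → EuclideanSpace ℝ (Fin d) → S → U → ℝ)
        (σ : EuclideanSpace ℝ (Fin d) → S → ℝ)
        (μ₁ μ₂ : ℝ → S),
        (∀ p : S, 0 ≤ ς p) →
        -- (A3)
        (∀ t ∈ Set.Icc (0:ℝ) T, ∀ x' x'' p' p'' uu,
          ‖f t x' p' uu - f t x'' p'' uu‖ ≤ K * (‖x' - x''‖ + dist p' p'')) →
        -- (A4)
        (∀ t ∈ Set.Icc (0:ℝ) T, ∀ x p uu,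
          ‖f t x p uu‖ ≤ M * (1 + ‖x‖ + ς p) ∧ |g t x p uu| ≤ M * (1 + ‖x‖ + κ (ς p))) →
        -- (A5) for σ
        (∀ (x' x'' : EuclideanSpace ℝ (Fin d)) (p' p'' : S),
          |σ x' p' - σ x'' p''| ≤ R * (‖x' - x''‖ + dist p' p'')
            * (1 + ‖x'‖ + ‖x''‖ + κ (ς p') + κ (ς p''))) →
        -- (A5) for g
        (∀ t ∈ Set.Icc (0:ℝ) T, ∀ (x' x'' : EuclideanSpace ℝ (Fin d)) (p' p'' : S) (uu : U),
          |g t x' p' uu - g t x'' p'' uu| ≤ R * (‖x' - x''‖ + dist p' p'')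
            * (1 + ‖x'‖ + ‖x''‖ + κ (ς p') + κ (ς p''))) →
        -- bounds on the flows
        (∀ t ∈ Set.Icc (0:ℝ) T, (ς (μ₁ t)) ^ 2 ≤ C₂ ∧ (ς (μ₂ t)) ^ 2 ≤ C₂ ∧
          dist (μ₁ t) (μ₂ t) ≤ D) →
        -- existence of the solutions x[·, μᵢ, s, ξ, v]
        (∀ μ ∈ ({μ₁, μ₂} : Set (ℝ → S)), ∀ (v : ℝ → U), Measurable v →
          ∀ s ∈ Set.Icc (0:ℝ) T, ∀ ξ : EuclideanSpace ℝ (Fin d),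
          ∃ x : ℝ → EuclideanSpace ℝ (Fin d),
            IntervalIntegrable (fun τ => f τ (x τ) (μ τ) (v τ)) volume s T ∧
            IntervalIntegrable (fun τ => g τ (x τ) (μ τ) (v τ)) volume s T ∧
            ∀ t ∈ Set.Icc s T, x t = ξ + ∫ τ in s..t, f τ (x τ) (μ τ) (v τ)) →
        ∀ s ∈ Set.Icc (0:ℝ) T, ∀ ξ : EuclideanSpace ℝ (Fin d),
          |sSup {r : ℝ | ∃ (v : ℝ → U) (x : ℝ → EuclideanSpace ℝ (Fin d)),
              Measurable v ∧
              IntervalIntegrable (fun τ => f τ (x τ) (μ₁ τ) (v τ)) volume s T ∧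
              IntervalIntegrable (fun τ => g τ (x τ) (μ₁ τ) (v τ)) volume s T ∧
              (∀ t ∈ Set.Icc s T, x t = ξ + ∫ τ in s..t, f τ (x τ) (μ₁ τ) (v τ)) ∧
              r = σ (x T) (μ₁ T) + ∫ τ in s..T, g τ (x τ) (μ₁ τ) (v τ)}
           - sSup {r : ℝ | ∃ (v : ℝ → U) (x : ℝ → EuclideanSpace ℝ (Fin d)),
              Measurable v ∧
              IntervalIntegrable (fun τ => f τ (x τ) (μ₂ τ) (v τ)) volume s T ∧
              IntervalIntegrable (fun τ => g τ (x τ) (μ₂ τ) (v τ)) volume s T ∧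
              (∀ t ∈ Set.Icc s T, x t = ξ + ∫ τ in s..t, f τ (x τ) (μ₂ τ) (v τ)) ∧
              r = σ (x T) (μ₂ T) + ∫ τ in s..T, g τ (x τ) (μ₂ τ) (v τ)}|
          ≤ c * (1 + ‖ξ‖) * D := by
  classical
  set Cς : ℝ := Real.sqrt C₂ with hCςdef
  have hCς : 0 ≤ Cς := Real.sqrt_nonneg _
  have hκCς : 0 ≤ κ Cς := hκ0 _ hCς
  have hT0 : 0 ≤ T := hT.le
  set c₁ : ℝ := K * T * Real.exp (K * T) with hc₁def
  have hc₁0 : 0 ≤ c₁ := by positivity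
  set B₀ : ℝ := (1 + M * (1 + Cς) * T) * Real.exp (M * T) with hB₀def
  have hB₀0 : 0 ≤ B₀ := by positivity
  set bigf : ℝ := 1 + 2 * B₀ + 2 * κ Cς with hbigfdef
  have hbigf0 : 0 ≤ bigf := by rw [hbigfdef]; linarith
  refine ⟨R * (c₁ + 1) * (1 + T) * bigf, ?_⟩
  set c : ℝ := R * (c₁ + 1) * (1 + T) * bigf with hcdef
  have hc0 : 0 ≤ c := by
    rw [hcdef]
    have h2 : (0:ℝ) ≤ R * (c₁ + 1) * (1 + T) := by positivity
    exact mul_nonneg h2 hbigf0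
  intro D hD S _instS ς U _instU f g σ μ₁ μ₂ hς hA3 hA4 hA5σ hA5g hflow hex s hsIcc ξ
  have hs0 : 0 ≤ s := hsIcc.1
  have hsT : s ≤ T := hsIcc.2
  have hmem0T : ∀ τ ∈ Set.Icc s T, τ ∈ Set.Icc (0:ℝ) T := fun τ hτ => ⟨hs0.trans hτ.1, hτ.2⟩
  have hTmem : T ∈ Set.Icc s T := ⟨hsT, le_refl T⟩
  have hT0T : T ∈ Set.Icc (0:ℝ) T := ⟨hT0, le_refl T⟩
  have hςb : ∀ μ ∈ ({μ₁, μ₂} : Set (ℝ → S)), ∀ t ∈ Set.Icc (0:ℝ) T, ς (μ t) ≤ Cς := by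
    intro μ hμ t ht
    have h2 : (ς (μ t)) ^ 2 ≤ C₂ := by
      rcases hμ with h | h
      · rw [h]; exact (hflow t ht).1
      · rw [Set.mem_singleton_iff.mp h]; exact (hflow t ht).2.1
    rw [hCςdef]
    exact (Real.le_sqrt (hς _) hC₂.le).mpr h2
  have hκb : ∀ μ ∈ ({μ₁, μ₂} : Set (ℝ → S)), ∀ t ∈ Set.Icc (0:ℝ) T, κ (ς (μ t)) ≤ κ Cς :=
    fun μ hμ t ht => hκmono _ _ (hς _) (hςb μ hμ t ht)
  set Bξ : ℝ := (‖ξ‖ + M * (1 + Cς) * T) * Real.exp (M * T) with hBξdef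
  have hBξ0 : 0 ≤ Bξ := by positivity
  have hq0 : (0:ℝ) ≤ M * (1 + Cς) * T := mul_nonneg (mul_nonneg hM.le (by linarith)) hT0
  have hBB : Bξ ≤ B₀ * (1 + ‖ξ‖) := by
    rw [hBξdef, hB₀def]
    nlinarith [Real.exp_pos (M * T), hq0, norm_nonneg ξ,
      mul_nonneg (mul_nonneg hq0 (norm_nonneg ξ)) (Real.exp_pos (M * T)).le]
  have hfacb : 1 + 2 * Bξ + 2 * κ Cς ≤ bigf * (1 + ‖ξ‖) := by
    rw [hbigfdef]
    nlinarith [hBB, hκCς, norm_nonneg ξ, hB₀0, mul_nonneg hκCς (norm_nonneg ξ)]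
  -- a priori bound on any trajectory
  have hsolb : ∀ μ ∈ ({μ₁, μ₂} : Set (ℝ → S)), ∀ (v : ℝ → U) (x : ℝ → EuclideanSpace ℝ (Fin d)),
      IntervalIntegrable (fun τ => f τ (x τ) (μ τ) (v τ)) volume s T →
      (∀ t ∈ Set.Icc s T, x t = ξ + ∫ τ in s..t, f τ (x τ) (μ τ) (v τ)) →
      ∀ t ∈ Set.Icc s T, ‖x t‖ ≤ Bξ := by
    intro μ hμ v x hFi hx
    have hC : (0:ℝ) ≤ M * (1 + Cς) := mul_nonneg hM.le (by linarith)
    exact my_sol_bound hs0 hsT hM hC ξ _ x hFi hx (fun τ hτ => by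
      have h4 := (hA4 τ (hmem0T τ hτ) (x τ) (μ τ) (v τ)).1
      have hςτ : ς (μ τ) ≤ Cς := hςb μ hμ τ (hmem0T τ hτ)
      nlinarith [norm_nonneg (x τ)])
  -- the sets of values
  set A : (ℝ → S) → Set ℝ := fun μ => {r : ℝ | ∃ (v : ℝ → U) (x : ℝ → EuclideanSpace ℝ (Fin d)),
      Measurable v ∧
      IntervalIntegrable (fun τ => f τ (x τ) (μ τ) (v τ)) volume s T ∧
      IntervalIntegrable (fun τ => g τ (x τ) (μ τ) (v τ)) volume s T ∧
      (∀ t ∈ Set.Icc s T, x t = ξ + ∫ τ in s..t, f τ (x τ) (μ τ) (v τ)) ∧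
      r = σ (x T) (μ T) + ∫ τ in s..T, g τ (x τ) (μ τ) (v τ)} with hAdef
  -- key comparison of value elements
  have key : ∀ μ μ', μ ∈ ({μ₁, μ₂} : Set (ℝ → S)) → μ' ∈ ({μ₁, μ₂} : Set (ℝ → S)) →
      (∀ t ∈ Set.Icc (0:ℝ) T, dist (μ t) (μ' t) ≤ D) →
      ∀ r ∈ A μ, ∃ r' ∈ A μ', r ≤ r' + c * (1 + ‖ξ‖) * D := by
    intro μ μ' hμ hμ' hdist r hr
    simp only [hAdef, Set.mem_setOf_eq] at hr ⊢
    obtain ⟨v, x₁, hv, hFi₁, hGi₁, hx₁, hreq⟩ := hr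
    obtain ⟨x₂, hFi₂, hGi₂, hx₂⟩ := hex μ' hμ' v hv s hsIcc ξ
    refine ⟨_, ⟨v, x₂, hv, hFi₂, hGi₂, hx₂, rfl⟩, ?_⟩
    have hb₁ := hsolb μ hμ v x₁ hFi₁ hx₁
    have hb₂ := hsolb μ' hμ' v x₂ hFi₂ hx₂
    -- difference of trajectories
    have hxeq : ∀ t ∈ Set.Icc s T, x₁ t - x₂ t = (0 : EuclideanSpace ℝ (Fin d)) +
        ∫ τ in s..t, (f τ (x₁ τ) (μ τ) (v τ) - f τ (x₂ τ) (μ' τ) (v τ)) := by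
      intro t ht
      have hsub : Set.uIcc s t ⊆ Set.uIcc s T :=
        Set.uIcc_subset_uIcc Set.left_mem_uIcc (by rw [Set.uIcc_of_le hsT]; exact ht)
      rw [hx₁ t ht, hx₂ t ht,
        intervalIntegral.integral_sub (hFi₁.mono_set hsub) (hFi₂.mono_set hsub), zero_add]
      abel
    have hFb2 : ∀ τ ∈ Set.Icc s T, ‖f τ (x₁ τ) (μ τ) (v τ) - f τ (x₂ τ) (μ' τ) (v τ)‖ ≤
        K * ‖x₁ τ - x₂ τ‖ + K * D := by
      intro τ hτ
      have h3 := hA3 τ (hmem0T τ hτ) (x₁ τ) (x₂ τ) (μ τ) (μ' τ) (v τ)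
      have hd := hdist τ (hmem0T τ hτ)
      nlinarith [dist_nonneg (x := μ τ) (y := μ' τ)]
    have hdb := my_sol_bound hs0 hsT hK (mul_nonneg hK.le hD) (0 : EuclideanSpace ℝ (Fin d)) _
      (fun t => x₁ t - x₂ t) (hFi₁.sub hFi₂) hxeq hFb2
    have hdiffb : ∀ t ∈ Set.Icc s T, ‖x₁ t - x₂ t‖ ≤ c₁ * D := by
      intro t ht
      have h := hdb t ht
      rw [norm_zero, zero_add] at h
      calc ‖x₁ t - x₂ t‖ ≤ K * D * T * Real.exp (K * T) := h
        _ = c₁ * D := by rw [hc₁def]; ring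
    -- common constants
    have hfac1nn : (0:ℝ) ≤ (c₁ + 1) * D := mul_nonneg (by linarith) hD
    have hCbnn : (0:ℝ) ≤ (c₁ + 1) * D * (1 + 2 * Bξ + 2 * κ Cς) :=
      mul_nonneg hfac1nn (by linarith)
    -- σ estimate
    have hσ : σ (x₁ T) (μ T) - σ (x₂ T) (μ' T) ≤
        R * ((c₁ + 1) * D * (1 + 2 * Bξ + 2 * κ Cς)) := by
      have h1 : σ (x₁ T) (μ T) - σ (x₂ T) (μ' T) ≤
          R * (‖x₁ T - x₂ T‖ + dist (μ T) (μ' T)) *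
            (1 + ‖x₁ T‖ + ‖x₂ T‖ + κ (ς (μ T)) + κ (ς (μ' T))) :=
        (le_abs_self _).trans (hA5σ (x₁ T) (x₂ T) (μ T) (μ' T))
      have hfac1 : ‖x₁ T - x₂ T‖ + dist (μ T) (μ' T) ≤ (c₁ + 1) * D := by
        have := hdiffb T hTmem
        have := hdist T hT0T
        nlinarith
      have hfac2 : 1 + ‖x₁ T‖ + ‖x₂ T‖ + κ (ς (μ T)) + κ (ς (μ' T)) ≤
          1 + 2 * Bξ + 2 * κ Cς := by
        have := hb₁ T hTmem; have := hb₂ T hTmem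
        have := hκb μ hμ T hT0T; have := hκb μ' hμ' T hT0T
        linarith
      have hfg0 : (0:ℝ) ≤ 1 + ‖x₁ T‖ + ‖x₂ T‖ + κ (ς (μ T)) + κ (ς (μ' T)) := by
        have := hκ0 (ς (μ T)) (hς _); have := hκ0 (ς (μ' T)) (hς _)
        have := norm_nonneg (x₁ T); have := norm_nonneg (x₂ T)
        linarith
      calc σ (x₁ T) (μ T) - σ (x₂ T) (μ' T)
          ≤ R * (‖x₁ T - x₂ T‖ + dist (μ T) (μ' T)) *
            (1 + ‖x₁ T‖ + ‖x₂ T‖ + κ (ς (μ T)) + κ (ς (μ' T))) := h1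
        _ = R * ((‖x₁ T - x₂ T‖ + dist (μ T) (μ' T)) *
            (1 + ‖x₁ T‖ + ‖x₂ T‖ + κ (ς (μ T)) + κ (ς (μ' T)))) := by ring
        _ ≤ R * ((c₁ + 1) * D * (1 + 2 * Bξ + 2 * κ Cς)) :=
            mul_le_mul_of_nonneg_left (mul_le_mul hfac1 hfac2 hfg0 hfac1nn) hR.le
    -- g estimate
    have hgint : (∫ τ in s..T, g τ (x₁ τ) (μ τ) (v τ)) -
        (∫ τ in s..T, g τ (x₂ τ) (μ' τ) (v τ)) ≤
        R * ((c₁ + 1) * D * (1 + 2 * Bξ + 2 * κ Cς)) * T := by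
      rw [← intervalIntegral.integral_sub hGi₁ hGi₂]
      have hbound : ∀ τ ∈ Set.uIoc s T,
          ‖g τ (x₁ τ) (μ τ) (v τ) - g τ (x₂ τ) (μ' τ) (v τ)‖ ≤
            R * ((c₁ + 1) * D * (1 + 2 * Bξ + 2 * κ Cς)) := by
        intro τ hτ
        rw [Set.uIoc_of_le hsT] at hτ
        have hτ' : τ ∈ Set.Icc s T := ⟨hτ.1.le, hτ.2⟩
        have h1 := hA5g τ (hmem0T τ hτ') (x₁ τ) (x₂ τ) (μ τ) (μ' τ) (v τ)
        have hfac1 : ‖x₁ τ - x₂ τ‖ + dist (μ τ) (μ' τ) ≤ (c₁ + 1) * D := by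
          have := hdiffb τ hτ'
          have := hdist τ (hmem0T τ hτ')
          nlinarith
        have hfac2 : 1 + ‖x₁ τ‖ + ‖x₂ τ‖ + κ (ς (μ τ)) + κ (ς (μ' τ)) ≤
            1 + 2 * Bξ + 2 * κ Cς := by
          have := hb₁ τ hτ'; have := hb₂ τ hτ'
          have := hκb μ hμ τ (hmem0T τ hτ'); have := hκb μ' hμ' τ (hmem0T τ hτ')
          linarith
        have hfg0 : (0:ℝ) ≤ 1 + ‖x₁ τ‖ + ‖x₂ τ‖ + κ (ς (μ τ)) + κ (ς (μ' τ)) := by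
          have := hκ0 (ς (μ τ)) (hς _); have := hκ0 (ς (μ' τ)) (hς _)
          have := norm_nonneg (x₁ τ); have := norm_nonneg (x₂ τ)
          linarith
        rw [Real.norm_eq_abs]
        calc |g τ (x₁ τ) (μ τ) (v τ) - g τ (x₂ τ) (μ' τ) (v τ)|
            ≤ R * (‖x₁ τ - x₂ τ‖ + dist (μ τ) (μ' τ)) *
              (1 + ‖x₁ τ‖ + ‖x₂ τ‖ + κ (ς (μ τ)) + κ (ς (μ' τ))) := h1
          _ = R * ((‖x₁ τ - x₂ τ‖ + dist (μ τ) (μ' τ)) *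
              (1 + ‖x₁ τ‖ + ‖x₂ τ‖ + κ (ς (μ τ)) + κ (ς (μ' τ)))) := by ring
          _ ≤ R * ((c₁ + 1) * D * (1 + 2 * Bξ + 2 * κ Cς)) :=
              mul_le_mul_of_nonneg_left (mul_le_mul hfac1 hfac2 hfg0 hfac1nn) hR.le
      have h := intervalIntegral.norm_integral_le_of_norm_le_const hbound
      rw [Real.norm_eq_abs, abs_of_nonneg (by linarith : (0:ℝ) ≤ T - s)] at h
      have h2 := (le_abs_self _).trans h
      have hCb0 : (0:ℝ) ≤ R * ((c₁ + 1) * D * (1 + 2 * Bξ + 2 * κ Cς)) :=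
        mul_nonneg hR.le hCbnn
      nlinarith
    -- conclusion
    have hfinal : R * ((c₁ + 1) * D * (1 + 2 * Bξ + 2 * κ Cς)) * (1 + T) ≤
        c * (1 + ‖ξ‖) * D := by
      have hpre : (0:ℝ) ≤ R * (c₁ + 1) * (1 + T) * D :=
        mul_nonneg (mul_nonneg (mul_nonneg hR.le (by linarith)) (by linarith)) hD
      calc R * ((c₁ + 1) * D * (1 + 2 * Bξ + 2 * κ Cς)) * (1 + T)
          = (R * (c₁ + 1) * (1 + T) * D) * (1 + 2 * Bξ + 2 * κ Cς) := by ring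
        _ ≤ (R * (c₁ + 1) * (1 + T) * D) * (bigf * (1 + ‖ξ‖)) :=
            mul_le_mul_of_nonneg_left hfacb hpre
        _ = c * (1 + ‖ξ‖) * D := by rw [hcdef]; ring
    rw [hreq]
    nlinarith [hσ, hgint, hfinal,
      mul_nonneg (mul_nonneg hR.le hCbnn) hT0]
  -- upper bounds for the value sets
  have hbdd : ∀ μ ∈ ({μ₁, μ₂} : Set (ℝ → S)), BddAbove (A μ) := by
    intro μ hμ
    refine ⟨σ 0 (μ T) + R * (Bξ * (1 + Bξ + 2 * κ Cς)) + M * (1 + Bξ + κ Cς) * T, ?_⟩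
    intro r hr
    simp only [hAdef, Set.mem_setOf_eq] at hr
    obtain ⟨v, x, hv, hFi, hGi, hx, rfl⟩ := hr
    have hbx := hsolb μ hμ v x hFi hx
    have hxT := hbx T hTmem
    have hκT := hκb μ hμ T hT0T
    have hκT0 : 0 ≤ κ (ς (μ T)) := hκ0 _ (hς _)
    have hσb : σ (x T) (μ T) ≤ σ 0 (μ T) + R * (Bξ * (1 + Bξ + 2 * κ Cς)) := by
      have h := hA5σ (x T) 0 (μ T) (μ T)
      rw [dist_self, sub_zero, norm_zero] at h
      have h1 : σ (x T) (μ T) - σ 0 (μ T) ≤ R * (‖x T‖ + 0) *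
          (1 + ‖x T‖ + 0 + κ (ς (μ T)) + κ (ς (μ T))) := (le_abs_self _).trans h
      have e1 : ‖x T‖ * (1 + ‖x T‖ + 2 * κ (ς (μ T))) ≤ Bξ * (1 + Bξ + 2 * κ Cς) :=
        mul_le_mul hxT (by linarith) (by linarith [norm_nonneg (x T)]) hBξ0
      have h3 : R * (‖x T‖ * (1 + ‖x T‖ + 2 * κ (ς (μ T)))) ≤
          R * (Bξ * (1 + Bξ + 2 * κ Cς)) := mul_le_mul_of_nonneg_left e1 hR.le
      nlinarith
    have hgb : (∫ τ in s..T, g τ (x τ) (μ τ) (v τ)) ≤ M * (1 + Bξ + κ Cς) * T := by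
      have hbound : ∀ τ ∈ Set.uIoc s T, ‖g τ (x τ) (μ τ) (v τ)‖ ≤ M * (1 + Bξ + κ Cς) := by
        intro τ hτ
        rw [Set.uIoc_of_le hsT] at hτ
        have hτ' : τ ∈ Set.Icc s T := ⟨hτ.1.le, hτ.2⟩
        have h4 := (hA4 τ (hmem0T τ hτ') (x τ) (μ τ) (v τ)).2
        have hb1 := hbx τ hτ'
        have hb2 := hκb μ hμ τ (hmem0T τ hτ')
        rw [Real.norm_eq_abs]
        nlinarith
      have h := intervalIntegral.norm_integral_le_of_norm_le_const hbound
      rw [Real.norm_eq_abs, abs_of_nonneg (by linarith : (0:ℝ) ≤ T - s)] at h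
      have hC0 : (0:ℝ) ≤ M * (1 + Bξ + κ Cς) := mul_nonneg hM.le (by linarith)
      have h2 := (le_abs_self _).trans h
      nlinarith
    linarith
  -- final assembly
  have main : |sSup (A μ₁) - sSup (A μ₂)| ≤ c * (1 + ‖ξ‖) * D := by
    have hm1 : μ₁ ∈ ({μ₁, μ₂} : Set (ℝ → S)) := Set.mem_insert _ _
    have hm2 : μ₂ ∈ ({μ₁, μ₂} : Set (ℝ → S)) := Set.mem_insert_iff.mpr (Or.inr rfl)
    have hε0 : 0 ≤ c * (1 + ‖ξ‖) * D :=
      mul_nonneg (mul_nonneg hc0 (by linarith [norm_nonneg ξ])) hD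
    rcases isEmpty_or_nonempty U with hU | hU
    · have hAe : ∀ μ : ℝ → S, A μ = ∅ := by
        intro μ
        rw [Set.eq_empty_iff_forall_notMem]
        intro r hr
        simp only [hAdef, Set.mem_setOf_eq] at hr
        obtain ⟨v, -⟩ := hr
        exact hU.false (v 0)
      rw [hAe μ₁, hAe μ₂, Real.sSup_empty, sub_zero, abs_zero]
      exact hε0
    · obtain ⟨u₀⟩ := hU
      have hne : ∀ μ ∈ ({μ₁, μ₂} : Set (ℝ → S)), (A μ).Nonempty := by
        intro μ hμ
        obtain ⟨x, h1, h2, h3⟩ := hex μ hμ (fun _ => u₀) measurable_const s hsIcc ξ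
        refine ⟨σ (x T) (μ T) + ∫ τ in s..T, g τ (x τ) (μ τ) u₀, ?_⟩
        simp only [hAdef, Set.mem_setOf_eq]
        exact ⟨fun _ => u₀, x, measurable_const, h1, h2, h3, rfl⟩
      have hd12 : ∀ t ∈ Set.Icc (0:ℝ) T, dist (μ₁ t) (μ₂ t) ≤ D :=
        fun t ht => (hflow t ht).2.2
      have hd21 : ∀ t ∈ Set.Icc (0:ℝ) T, dist (μ₂ t) (μ₁ t) ≤ D := by
        intro t ht; rw [dist_comm]; exact hd12 t ht
      have d1 : sSup (A μ₁) ≤ sSup (A μ₂) + c * (1 + ‖ξ‖) * D := by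
        apply csSup_le (hne μ₁ hm1)
        intro r hr
        obtain ⟨r', hr', hle⟩ := key μ₁ μ₂ hm1 hm2 hd12 r hr
        exact hle.trans (add_le_add_left (le_csSup (hbdd μ₂ hm2) hr') _)
      have d2 : sSup (A μ₂) ≤ sSup (A μ₁) + c * (1 + ‖ξ‖) * D := by
        apply csSup_le (hne μ₂ hm2)
        intro r hr
        obtain ⟨r', hr', hle⟩ := key μ₂ μ₁ hm2 hm1 hd21 r hr
        exact hle.trans (add_le_add_left (le_csSup (hbdd μ₁ hm1) hr') _)
      rw [abs_sub_le_iff]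
      constructor <;> linarith
  exact main
end

section
/- Let (Ω, ℱ, P) be a probability space, T, R, C₁, C₂, C₃, C₄, C₅, C₆ > 0, 0 < ε ≤ 1, s ∈ [0,T], ξ ∈ ℝ^d, and let κ : [0,∞) → [0,∞) be increasing. Let (P, dist) be a metric space with ς : P → [0,∞), U a set, and g : [0,T] × ℝ^d × P × U → ℝ, σ : ℝ^d × P → ℝ satisfy the Lipschitz-with-growth bounds (A5): |σ(x',p') − σ(x'',p'')| ≤ R(‖x' − x''‖ + dist(p',p''))(1 + ‖x'‖ + ‖x''‖ + κ(ς(p')) + κ(ς(p''))) and |g(t,x',p',u) − g(t,x'',p'',u)| ≤ R(‖x' − x''‖ + dist(p',p''))(1 + ‖x'‖ + ‖x''‖ + κ(ς(p')) + κ(ς(p''))). Let ζ, μ : [0,T] → P be flows with ς(ζ[t])² ≤ C₁, ς(μ[t])² ≤ C₂, and dist(ζ[t], μ[t])² ≤ C₅ ε for all t, let u : [s,T] × Ω → U be a measurable control, and let X, Y : [s,T] × Ω → ℝ^d be measurable processes with X(s) = Y(s) = ξ almost surely, E‖Y(t)‖² ≤ C₃(1 + ‖ξ‖²), E‖X(t)‖²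 ≤ C₄(1 + ‖ξ‖²), and E‖X(t) − Y(t)‖² ≤ C₆ ε (1 + ‖ξ‖²) for all t ∈ [s,T]. Then there exists a constant c depending only on R, T, κ, C₁, C₂, C₃, C₄, C₅, C₆ such that |E[σ(X(T), μ[T]) + ∫ₛᵀ g(t, X(t), μ[t], u(t)) dt] − E[σ(Y(T), ζ[T]) + ∫ₛᵀ g(t, Y(t), ζ[t], u(t)) dt]| ≤ c ε^{1/2} (1 + ‖ξ‖²). -/
open MeasureTheory

lemma key_ineq (R δ C₅ K n a b Dd k : ℝ) (hR : 0 < R) (hδ : 0 < δ)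
    (ha : 0 ≤ a) (hb : 0 ≤ b)
    (hD2 : Dd ^ 2 ≤ C₅ * δ ^ 2) (hk : 0 ≤ k) (hkK : k ≤ K) :
    R * (n + Dd) * (1 + a + b + k) ≤
      R / δ * n ^ 2 + 2 * R * δ * a ^ 2 + 2 * R * δ * b ^ 2 +
        (R * C₅ * δ + 2 * R * δ * (1 + K ^ 2)) := by
  have hK : 0 ≤ K := hk.trans hkK
  have h1 : δ * ((n + Dd) * (1 + a + b + k)) ≤
      n ^ 2 + C₅ * δ ^ 2 + 2 * δ ^ 2 * (1 + a ^ 2 + b ^ 2 + K ^ 2) := by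
    have e3 : 2 * (δ * ((n + Dd) * (1 + a + b + k))) ≤
        (n + Dd) ^ 2 + δ ^ 2 * (1 + a + b + k) ^ 2 := by
      nlinarith [sq_nonneg (n + Dd - δ * (1 + a + b + k))]
    have e1 : (n + Dd) ^ 2 ≤ 2 * n ^ 2 + 2 * C₅ * δ ^ 2 := by
      nlinarith [sq_nonneg (n - Dd)]
    have e2a : (1 + a + b + k) ^ 2 ≤ (1 + a + b + K) ^ 2 := by
      nlinarith [mul_nonneg (sub_nonneg.mpr hkK) (by linarith : (0:ℝ) ≤ 2 + 2*a + 2*b + k + K)]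
    have e2b : (1 + a + b + K) ^ 2 ≤ 4 * (1 + a ^ 2 + b ^ 2 + K ^ 2) := by
      nlinarith [sq_nonneg (1 - a), sq_nonneg (1 - b), sq_nonneg (1 - K),
        sq_nonneg (a - b), sq_nonneg (a - K), sq_nonneg (b - K)]
    have e2' : δ ^ 2 * (1 + a + b + k) ^ 2 ≤ δ ^ 2 * (4 * (1 + a ^ 2 + b ^ 2 + K ^ 2)) :=
      mul_le_mul_of_nonneg_left (e2a.trans e2b) (sq_nonneg δ)
    nlinarith [e3, e1, e2']
  have h2 := mul_le_mul_of_nonneg_left h1 (le_of_lt (div_pos hR hδ))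
  have hδ' : δ ≠ 0 := ne_of_gt hδ
  calc R * (n + Dd) * (1 + a + b + k)
      = R / δ * (δ * ((n + Dd) * (1 + a + b + k))) := by field_simp
    _ ≤ R / δ * (n ^ 2 + C₅ * δ ^ 2 + 2 * δ ^ 2 * (1 + a ^ 2 + b ^ 2 + K ^ 2)) := h2
    _ = R / δ * n ^ 2 + 2 * R * δ * a ^ 2 + 2 * R * δ * b ^ 2 +
        (R * C₅ * δ + 2 * R * δ * (1 + K ^ 2)) := by field_simp; ring

set_option maxHeartbeats 1000000 in
/-- payoff-closeness estimate (inequality (35) in the proof of Theorem 1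
of the paper).  The expected payoffs of the admissible process `Y` (with flow `ζ`) and of
the companion deterministic-dynamics process `X` (with flow `μ`), started at `ξ` at time
`s` with the same control, differ by at most `c √ε (1 + ‖ξ‖²)`, where `c` depends only on
`R, T, κ, C₁, …, C₆`. -/
theorem stmt_14 (d : ℕ) (T R C₁ C₂ C₃ C₄ C₅ C₆ : ℝ) (hT : 0 < T) (hR : 0 < R)
    (hC₁ : 0 < C₁) (hC₂ : 0 < C₂) (hC₃ : 0 < C₃) (hC₄ : 0 < C₄) (hC₅ : 0 < C₅)
    (hC₆ : 0 < C₆) (κ : ℝ → ℝ)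
    (hκ0 : ∀ r : ℝ, 0 ≤ r → 0 ≤ κ r)
    (hκmono : ∀ a b : ℝ, 0 ≤ a → a ≤ b → κ a ≤ κ b) :
    ∃ c : ℝ, ∀ (ε : ℝ), 0 < ε → ε ≤ 1 →
      ∀ s ∈ Set.Icc (0:ℝ) T, ∀ (ξ : EuclideanSpace ℝ (Fin d)),
      ∀ (Ω : Type) [MeasurableSpace Ω] (P : Measure Ω) [IsProbabilityMeasure P]
        (S : Type) [MetricSpace S] (ς : S → ℝ)
        (U : Type) [MeasurableSpace U]
        (g : ℝ → EuclideanSpace ℝ (Fin d) → S → U → ℝ)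
        (σ : EuclideanSpace ℝ (Fin d) → S → ℝ)
        (ζ μ : ℝ → S) (u : ℝ → Ω → U)
        (X Y : ℝ → Ω → EuclideanSpace ℝ (Fin d)),
        (∀ p : S, 0 ≤ ς p) →
        -- (A5) for σ
        (∀ (x' x'' : EuclideanSpace ℝ (Fin d)) (p' p'' : S),
          |σ x' p' - σ x'' p''| ≤ R * (‖x' - x''‖ + dist p' p'')
            * (1 + ‖x'‖ + ‖x''‖ + κ (ς p') + κ (ς p''))) →
        -- (A5) for g
        (∀ t ∈ Set.Icc (0:ℝ) T, ∀ (x' x'' : EuclideanSpace ℝ (Fin d)) (p' p'' : S) (uu : U),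
          |g t x' p' uu - g t x'' p'' uu| ≤ R * (‖x' - x''‖ + dist p' p'')
            * (1 + ‖x'‖ + ‖x''‖ + κ (ς p') + κ (ς p''))) →
        -- bounds on the flows
        (∀ t ∈ Set.Icc (0:ℝ) T, (ς (ζ t)) ^ 2 ≤ C₁ ∧ (ς (μ t)) ^ 2 ≤ C₂ ∧
          (dist (ζ t) (μ t)) ^ 2 ≤ C₅ * ε) →
        Measurable (Function.uncurry u) → Measurable (Function.uncurry X) →
        Measurable (Function.uncurry Y) →
        (∀ᵐ ω ∂P, X s ω = ξ ∧ Y s ω = ξ) →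
        -- moment bounds
        (∀ t ∈ Set.Icc s T, Integrable (fun ω => ‖Y t ω‖ ^ 2) P ∧
          ∫ ω, ‖Y t ω‖ ^ 2 ∂P ≤ C₃ * (1 + ‖ξ‖ ^ 2)) →
        (∀ t ∈ Set.Icc s T, Integrable (fun ω => ‖X t ω‖ ^ 2) P ∧
          ∫ ω, ‖X t ω‖ ^ 2 ∂P ≤ C₄ * (1 + ‖ξ‖ ^ 2)) →
        (∀ t ∈ Set.Icc s T, Integrable (fun ω => ‖X t ω - Y t ω‖ ^ 2) P ∧
          ∫ ω, ‖X t ω - Y t ω‖ ^ 2 ∂P ≤ C₆ * ε * (1 + ‖ξ‖ ^ 2)) →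
        -- integrability of the payoffs
        (∀ ω, IntervalIntegrable (fun t => g t (X t ω) (μ t) (u t ω)) volume s T) →
        (∀ ω, IntervalIntegrable (fun t => g t (Y t ω) (ζ t) (u t ω)) volume s T) →
        Integrable (fun ω => σ (X T ω) (μ T) + ∫ t in s..T, g t (X t ω) (μ t) (u t ω)) P →
        Integrable (fun ω => σ (Y T ω) (ζ T) + ∫ t in s..T, g t (Y t ω) (ζ t) (u t ω)) P →
        |(∫ ω, (σ (X T ω) (μ T) + ∫ t in s..T, g t (X t ω) (μ t) (u t ω)) ∂P)
          - ∫ ω, (σ (Y T ω) (ζ T) + ∫ t in s..T, g t (Y t ω) (ζ t) (u t ω)) ∂P|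
          ≤ c * Real.sqrt ε * (1 + ‖ξ‖ ^ 2) := by
  classical
  set K : ℝ := κ (Real.sqrt C₁) + κ (Real.sqrt C₂) with hKdef
  have hK0 : 0 ≤ K := add_nonneg (hκ0 _ (Real.sqrt_nonneg _)) (hκ0 _ (Real.sqrt_nonneg _))
  set B : ℝ := R * (C₅ + C₆ + 2 * (1 + C₃ + C₄ + K ^ 2)) with hBdef
  have hB0 : 0 ≤ B := by positivity
  refine ⟨B * (1 + T), ?_⟩
  intro ε hε hε1 s hs ξ Ω _ P _ S _ ς U _ g σ ζ μ u X Y hς hσA5 hgA5 hflow hu hXm hYm hinit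
    hYmom hXmom hXYmom hgXint hgYint hPXint hPYint
  have hs0 : 0 ≤ s := hs.1
  have hsT : s ≤ T := hs.2
  set δ : ℝ := Real.sqrt ε with hδdef
  have hδ : 0 < δ := Real.sqrt_pos.mpr hε
  have hεδ : ε = δ ^ 2 := (Real.sq_sqrt hε.le).symm
  set Z : ℝ := 1 + ‖ξ‖ ^ 2 with hZdef
  have hZ1 : 1 ≤ Z := by rw [hZdef]; nlinarith [sq_nonneg ‖ξ‖]
  have hZ0 : 0 ≤ Z := by linarith
  set Q : EuclideanSpace ℝ (Fin d) → EuclideanSpace ℝ (Fin d) → ℝ :=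
    fun x y => R / δ * ‖x - y‖ ^ 2 + 2 * R * δ * ‖x‖ ^ 2 + 2 * R * δ * ‖y‖ ^ 2 +
      (R * C₅ * δ + 2 * R * δ * (1 + K ^ 2)) with hQdef
  have hQnn : ∀ x y, 0 ≤ Q x y := by
    intro x y
    simp only [hQdef]
    positivity
  -- flow consequences
  have hflowQ : ∀ t ∈ Set.Icc (0:ℝ) T,
      dist (μ t) (ζ t) ^ 2 ≤ C₅ * δ ^ 2 ∧
      (0 ≤ κ (ς (μ t)) + κ (ς (ζ t)) ∧ κ (ς (μ t)) + κ (ς (ζ t)) ≤ K) := by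
    intro t ht
    obtain ⟨h1, h2, h3⟩ := hflow t ht
    refine ⟨?_, ?_, ?_⟩
    · rw [dist_comm, ← hεδ]; exact h3
    · exact add_nonneg (hκ0 _ (hς _)) (hκ0 _ (hς _))
    · have hμb : ς (μ t) ≤ Real.sqrt C₂ := by
        have h := Real.sqrt_le_sqrt h2
        rwa [Real.sqrt_sq (hς _)] at h
      have hζb : ς (ζ t) ≤ Real.sqrt C₁ := by
        have h := Real.sqrt_le_sqrt h1
        rwa [Real.sqrt_sq (hς _)] at h
      have hm1 := hκmono _ _ (hς (μ t)) hμb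
      have hm2 := hκmono _ _ (hς (ζ t)) hζb
      rw [hKdef]; linarith
  -- pointwise bound for g
  have hgQ : ∀ t ∈ Set.Icc (0:ℝ) T, ∀ (x y : EuclideanSpace ℝ (Fin d)) (uu : U),
      |g t x (μ t) uu - g t y (ζ t) uu| ≤ Q x y := by
    intro t ht x y uu
    obtain ⟨hd2, hk0, hkK⟩ := hflowQ t ht
    have h1 := hgA5 t ht x y (μ t) (ζ t) uu
    have h2 := key_ineq R δ C₅ K ‖x - y‖ ‖x‖ ‖y‖ (dist (μ t) (ζ t))
      (κ (ς (μ t)) + κ (ς (ζ t))) hR hδ (norm_nonneg _) (norm_nonneg _) hd2 hk0 hkK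
    simp only [hQdef]
    linarith [h1, h2]
  have hT0 : (0:ℝ) ≤ T := hT.le
  have hTIcc : T ∈ Set.Icc (0:ℝ) T := ⟨hT0, le_refl T⟩
  -- pointwise bound for σ
  have hσQ : ∀ ω, |σ (X T ω) (μ T) - σ (Y T ω) (ζ T)| ≤ Q (X T ω) (Y T ω) := by
    intro ω
    obtain ⟨hd2, hk0, hkK⟩ := hflowQ T hTIcc
    have h1 := hσA5 (X T ω) (Y T ω) (μ T) (ζ T)
    have h2 := key_ineq R δ C₅ K ‖X T ω - Y T ω‖ ‖X T ω‖ ‖Y T ω‖ (dist (μ T) (ζ T))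
      (κ (ς (μ T)) + κ (ς (ζ T))) hR hδ (norm_nonneg _) (norm_nonneg _) hd2 hk0 hkK
    simp only [hQdef]
    linarith [h1, h2]
  -- integrability and integral bound of Q along the processes
  have hTmem : T ∈ Set.Icc s T := ⟨hsT, le_refl T⟩
  have hQint : ∀ t ∈ Set.Icc s T, Integrable (fun ω => Q (X t ω) (Y t ω)) P := by
    intro t ht
    have h1 := (hXYmom t ht).1
    have h2 := (hXmom t ht).1
    have h3 := (hYmom t ht).1
    simp only [hQdef]
    exact (((h1.const_mul (R / δ)).add (h2.const_mul (2 * R * δ))).add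
      (h3.const_mul (2 * R * δ))).add (integrable_const _)
  have hQbd : ∀ t ∈ Set.Icc s T, ∫ ω, Q (X t ω) (Y t ω) ∂P ≤ B * δ * Z := by
    intro t ht
    have h1 := hXYmom t ht
    have h2 := hXmom t ht
    have h3 := hYmom t ht
    have i1 : Integrable (fun ω => R / δ * ‖X t ω - Y t ω‖ ^ 2) P := h1.1.const_mul _
    have i2 : Integrable (fun ω => 2 * R * δ * ‖X t ω‖ ^ 2) P := h2.1.const_mul _
    have i3 : Integrable (fun ω => 2 * R * δ * ‖Y t ω‖ ^ 2) P := h3.1.const_mul _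
    have i12 : Integrable (fun ω => R / δ * ‖X t ω - Y t ω‖ ^ 2
        + 2 * R * δ * ‖X t ω‖ ^ 2) P := i1.add i2
    have i123 : Integrable (fun ω => R / δ * ‖X t ω - Y t ω‖ ^ 2
        + 2 * R * δ * ‖X t ω‖ ^ 2 + 2 * R * δ * ‖Y t ω‖ ^ 2) P := i12.add i3
    have hint : ∫ ω, Q (X t ω) (Y t ω) ∂P
        = R / δ * ∫ ω, ‖X t ω - Y t ω‖ ^ 2 ∂P + 2 * R * δ * ∫ ω, ‖X t ω‖ ^ 2 ∂P
          + 2 * R * δ * ∫ ω, ‖Y t ω‖ ^ 2 ∂P + (R * C₅ * δ + 2 * R * δ * (1 + K ^ 2)) := by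
      have e0 : ∫ ω, Q (X t ω) (Y t ω) ∂P
          = (∫ ω, (R / δ * ‖X t ω - Y t ω‖ ^ 2 + 2 * R * δ * ‖X t ω‖ ^ 2
              + 2 * R * δ * ‖Y t ω‖ ^ 2) ∂P)
            + ∫ _ω, (R * C₅ * δ + 2 * R * δ * (1 + K ^ 2)) ∂P :=
        integral_add i123 (integrable_const _)
      have e1 : ∫ ω, (R / δ * ‖X t ω - Y t ω‖ ^ 2 + 2 * R * δ * ‖X t ω‖ ^ 2
            + 2 * R * δ * ‖Y t ω‖ ^ 2) ∂P
          = (∫ ω, (R / δ * ‖X t ω - Y t ω‖ ^ 2 + 2 * R * δ * ‖X t ω‖ ^ 2) ∂P)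
            + ∫ ω, 2 * R * δ * ‖Y t ω‖ ^ 2 ∂P := integral_add i12 i3
      have e2 : ∫ ω, (R / δ * ‖X t ω - Y t ω‖ ^ 2 + 2 * R * δ * ‖X t ω‖ ^ 2) ∂P
          = (∫ ω, R / δ * ‖X t ω - Y t ω‖ ^ 2 ∂P)
            + ∫ ω, 2 * R * δ * ‖X t ω‖ ^ 2 ∂P := integral_add i1 i2
      rw [e0, e1, e2, integral_const_mul, integral_const_mul, integral_const_mul,
        integral_const]
      simp
    rw [hint]
    have hRδ : (0:ℝ) ≤ R / δ := div_nonneg hR.le hδ.le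
    have e1 : R / δ * ∫ ω, ‖X t ω - Y t ω‖ ^ 2 ∂P ≤ R / δ * (C₆ * ε * Z) :=
      mul_le_mul_of_nonneg_left h1.2 hRδ
    have e1' : R / δ * (C₆ * ε * Z) = R * C₆ * δ * Z := by
      rw [hεδ]; field_simp
    have e2 : 2 * R * δ * ∫ ω, ‖X t ω‖ ^ 2 ∂P ≤ 2 * R * δ * (C₄ * Z) :=
      mul_le_mul_of_nonneg_left h2.2 (by positivity)
    have e3 : 2 * R * δ * ∫ ω, ‖Y t ω‖ ^ 2 ∂P ≤ 2 * R * δ * (C₃ * Z) :=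
      mul_le_mul_of_nonneg_left h3.2 (by positivity)
    have e4 : R * C₅ * δ + 2 * R * δ * (1 + K ^ 2)
        ≤ (R * C₅ * δ + 2 * R * δ * (1 + K ^ 2)) * Z := by
      have h0 : (0:ℝ) ≤ R * C₅ * δ + 2 * R * δ * (1 + K ^ 2) := by positivity
      nlinarith [mul_nonneg h0 (by linarith : (0:ℝ) ≤ Z - 1)]
    calc R / δ * ∫ ω, ‖X t ω - Y t ω‖ ^ 2 ∂P + 2 * R * δ * ∫ ω, ‖X t ω‖ ^ 2 ∂P
          + 2 * R * δ * ∫ ω, ‖Y t ω‖ ^ 2 ∂P + (R * C₅ * δ + 2 * R * δ * (1 + K ^ 2))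
        ≤ R * C₆ * δ * Z + 2 * R * δ * (C₄ * Z) + 2 * R * δ * (C₃ * Z)
            + (R * C₅ * δ + 2 * R * δ * (1 + K ^ 2)) * Z := by
          rw [← e1']
          exact add_le_add (add_le_add (add_le_add e1 e2) e3) e4
      _ = B * δ * Z := by rw [hBdef]; ring
  -- measurability
  have hXsw : Measurable fun p : Ω × ℝ => X p.2 p.1 := hXm.comp measurable_swap
  have hYsw : Measurable fun p : Ω × ℝ => Y p.2 p.1 := hYm.comp measurable_swap
  have hQm : Measurable fun p : Ω × ℝ => ENNReal.ofReal (Q (X p.2 p.1) (Y p.2 p.1)) := by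
    have m1 : Measurable fun p : Ω × ℝ => ‖X p.2 p.1 - Y p.2 p.1‖ ^ 2 :=
      ((hXsw.sub hYsw).norm.pow_const 2)
    have m2 : Measurable fun p : Ω × ℝ => ‖X p.2 p.1‖ ^ 2 := (hXsw.norm.pow_const 2)
    have m3 : Measurable fun p : Ω × ℝ => ‖Y p.2 p.1‖ ^ 2 := (hYsw.norm.pow_const 2)
    simp only [hQdef]
    exact ((((m1.const_mul _).add (m2.const_mul _)).add (m3.const_mul _)).add_const _).ennreal_ofReal
  have hXT : Measurable fun ω : Ω => X T ω := hXm.comp measurable_prodMk_left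
  have hYT : Measurable fun ω : Ω => Y T ω := hYm.comp measurable_prodMk_left
  have hQmT : Measurable fun ω : Ω => ENNReal.ofReal (Q (X T ω) (Y T ω)) := by
    have m1 : Measurable fun ω : Ω => ‖X T ω - Y T ω‖ ^ 2 := ((hXT.sub hYT).norm.pow_const 2)
    have m2 : Measurable fun ω : Ω => ‖X T ω‖ ^ 2 := (hXT.norm.pow_const 2)
    have m3 : Measurable fun ω : Ω => ‖Y T ω‖ ^ 2 := (hYT.norm.pow_const 2)
    simp only [hQdef]
    exact ((((m1.const_mul _).add (m2.const_mul _)).add (m3.const_mul _)).add_const _).ennreal_ofReal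
  -- the two payoff functions
  set fX : Ω → ℝ := fun ω => σ (X T ω) (μ T) + ∫ t in s..T, g t (X t ω) (μ t) (u t ω) with hfX
  set fY : Ω → ℝ := fun ω => σ (Y T ω) (ζ T) + ∫ t in s..T, g t (Y t ω) (ζ t) (u t ω) with hfY
  have hsub : Integrable (fun ω => fX ω - fY ω) P := hPXint.sub hPYint
  have step1 : |(∫ ω, fX ω ∂P) - ∫ ω, fY ω ∂P| ≤ ∫ ω, |fX ω - fY ω| ∂P := by
    rw [← integral_sub hPXint hPYint]
    simpa [Real.norm_eq_abs] using norm_integral_le_integral_norm (μ := P) (fun ω => fX ω - fY ω)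
  have step2 : ENNReal.ofReal (∫ ω, |fX ω - fY ω| ∂P)
      = ∫⁻ ω, ENNReal.ofReal |fX ω - fY ω| ∂P :=
    ofReal_integral_eq_lintegral_ofReal hsub.abs (Filter.Eventually.of_forall fun ω => abs_nonneg _)
  have step3 : ∀ ω, ENNReal.ofReal |fX ω - fY ω| ≤
      ENNReal.ofReal (Q (X T ω) (Y T ω)) +
        ∫⁻ t in Set.Ioc s T, ENNReal.ofReal (Q (X t ω) (Y t ω)) := by
    intro ω
    have hgd : IntervalIntegrable
        (fun t => g t (X t ω) (μ t) (u t ω) - g t (Y t ω) (ζ t) (u t ω)) volume s T :=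
      (hgXint ω).sub (hgYint ω)
    have hsplit : fX ω - fY ω = (σ (X T ω) (μ T) - σ (Y T ω) (ζ T)) +
        ∫ t in s..T, (g t (X t ω) (μ t) (u t ω) - g t (Y t ω) (ζ t) (u t ω)) := by
      rw [intervalIntegral.integral_sub (hgXint ω) (hgYint ω)]
      simp only [hfX, hfY]; ring
    have hGpart : ENNReal.ofReal
        |∫ t in s..T, (g t (X t ω) (μ t) (u t ω) - g t (Y t ω) (ζ t) (u t ω))| ≤
        ∫⁻ t in Set.Ioc s T, ENNReal.ofReal (Q (X t ω) (Y t ω)) := by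
      have e1 := intervalIntegral.abs_integral_le_integral_abs (μ := volume)
        (f := fun t => g t (X t ω) (μ t) (u t ω) - g t (Y t ω) (ζ t) (u t ω)) hsT
      have e2 : (∫ t in s..T, |g t (X t ω) (μ t) (u t ω) - g t (Y t ω) (ζ t) (u t ω)|)
          = ∫ t in Set.Ioc s T, |g t (X t ω) (μ t) (u t ω) - g t (Y t ω) (ζ t) (u t ω)| :=
        intervalIntegral.integral_of_le hsT
      have habs : IntegrableOn
          (fun t => |g t (X t ω) (μ t) (u t ω) - g t (Y t ω) (ζ t) (u t ω)|)
          (Set.Ioc s T) volume :=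
        (intervalIntegrable_iff_integrableOn_Ioc_of_le hsT).mp hgd.abs
      have e3 : ENNReal.ofReal
          (∫ t in Set.Ioc s T, |g t (X t ω) (μ t) (u t ω) - g t (Y t ω) (ζ t) (u t ω)|)
          = ∫⁻ t in Set.Ioc s T,
              ENNReal.ofReal |g t (X t ω) (μ t) (u t ω) - g t (Y t ω) (ζ t) (u t ω)| :=
        ofReal_integral_eq_lintegral_ofReal habs
          (Filter.Eventually.of_forall fun t => abs_nonneg _)
      have e4 : ∫⁻ t in Set.Ioc s T,
            ENNReal.ofReal |g t (X t ω) (μ t) (u t ω) - g t (Y t ω) (ζ t) (u t ω)|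
          ≤ ∫⁻ t in Set.Ioc s T, ENNReal.ofReal (Q (X t ω) (Y t ω)) := by
        refine lintegral_mono_ae ?_
        filter_upwards [ae_restrict_mem measurableSet_Ioc] with t ht
        exact ENNReal.ofReal_le_ofReal (hgQ t ⟨hs0.trans ht.1.le, ht.2⟩ _ _ _)
      calc ENNReal.ofReal |∫ t in s..T, (g t (X t ω) (μ t) (u t ω) - g t (Y t ω) (ζ t) (u t ω))|
          ≤ ENNReal.ofReal (∫ t in s..T,
              |g t (X t ω) (μ t) (u t ω) - g t (Y t ω) (ζ t) (u t ω)|) :=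
            ENNReal.ofReal_le_ofReal e1
        _ = ∫⁻ t in Set.Ioc s T,
              ENNReal.ofReal |g t (X t ω) (μ t) (u t ω) - g t (Y t ω) (ζ t) (u t ω)| := by
            rw [e2, e3]
        _ ≤ _ := e4
    calc ENNReal.ofReal |fX ω - fY ω|
        ≤ ENNReal.ofReal (|σ (X T ω) (μ T) - σ (Y T ω) (ζ T)| +
            |∫ t in s..T, (g t (X t ω) (μ t) (u t ω) - g t (Y t ω) (ζ t) (u t ω))|) := by
          refine ENNReal.ofReal_le_ofReal ?_
          rw [hsplit]; exact abs_add_le _ _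
      _ ≤ ENNReal.ofReal |σ (X T ω) (μ T) - σ (Y T ω) (ζ T)| +
            ENNReal.ofReal |∫ t in s..T, (g t (X t ω) (μ t) (u t ω) - g t (Y t ω) (ζ t) (u t ω))| :=
          ENNReal.ofReal_add_le
      _ ≤ _ := add_le_add (ENNReal.ofReal_le_ofReal (hσQ ω)) hGpart
  -- Tonelli and bounds
  have term1 : ∫⁻ ω, ENNReal.ofReal (Q (X T ω) (Y T ω)) ∂P ≤ ENNReal.ofReal (B * δ * Z) := by
    rw [← ofReal_integral_eq_lintegral_ofReal (hQint T hTmem)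
      (Filter.Eventually.of_forall fun ω => hQnn _ _)]
    exact ENNReal.ofReal_le_ofReal (hQbd T hTmem)
  have term2 : ∫⁻ ω, (∫⁻ t in Set.Ioc s T, ENNReal.ofReal (Q (X t ω) (Y t ω))) ∂P
      ≤ ENNReal.ofReal (T * (B * δ * Z)) := by
    have hswap : ∫⁻ ω, (∫⁻ t in Set.Ioc s T, ENNReal.ofReal (Q (X t ω) (Y t ω))) ∂P
        = ∫⁻ t in Set.Ioc s T, (∫⁻ ω, ENNReal.ofReal (Q (X t ω) (Y t ω)) ∂P) :=
      lintegral_lintegral_swap hQm.aemeasurable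
    rw [hswap]
    have inner : ∀ t ∈ Set.Ioc s T,
        ∫⁻ ω, ENNReal.ofReal (Q (X t ω) (Y t ω)) ∂P ≤ ENNReal.ofReal (B * δ * Z) := by
      intro t ht
      have htm : t ∈ Set.Icc s T := ⟨ht.1.le, ht.2⟩
      rw [← ofReal_integral_eq_lintegral_ofReal (hQint t htm)
        (Filter.Eventually.of_forall fun ω => hQnn _ _)]
      exact ENNReal.ofReal_le_ofReal (hQbd t htm)
    have hBδZ : (0:ℝ) ≤ B * δ * Z := by positivity
    calc ∫⁻ t in Set.Ioc s T, (∫⁻ ω, ENNReal.ofReal (Q (X t ω) (Y t ω)) ∂P)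
        ≤ ∫⁻ _ in Set.Ioc s T, ENNReal.ofReal (B * δ * Z) :=
          setLIntegral_mono' measurableSet_Ioc inner
      _ = ENNReal.ofReal (B * δ * Z) * volume (Set.Ioc s T) := setLIntegral_const _ _
      _ = ENNReal.ofReal (B * δ * Z) * ENNReal.ofReal (T - s) := by rw [Real.volume_Ioc]
      _ ≤ ENNReal.ofReal (B * δ * Z) * ENNReal.ofReal T :=
          mul_le_mul_right (ENNReal.ofReal_le_ofReal (by linarith)) _
      _ = ENNReal.ofReal (T * (B * δ * Z)) := by
          rw [← ENNReal.ofReal_mul hBδZ, mul_comm]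
  -- conclusion
  have final : ENNReal.ofReal |(∫ ω, fX ω ∂P) - ∫ ω, fY ω ∂P|
      ≤ ENNReal.ofReal (B * (1 + T) * δ * Z) := by
    calc ENNReal.ofReal |(∫ ω, fX ω ∂P) - ∫ ω, fY ω ∂P|
        ≤ ENNReal.ofReal (∫ ω, |fX ω - fY ω| ∂P) := ENNReal.ofReal_le_ofReal step1
      _ = ∫⁻ ω, ENNReal.ofReal |fX ω - fY ω| ∂P := step2
      _ ≤ ∫⁻ ω, (ENNReal.ofReal (Q (X T ω) (Y T ω)) +
            ∫⁻ t in Set.Ioc s T, ENNReal.ofReal (Q (X t ω) (Y t ω))) ∂P :=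
          lintegral_mono step3
      _ = (∫⁻ ω, ENNReal.ofReal (Q (X T ω) (Y T ω)) ∂P) +
            ∫⁻ ω, (∫⁻ t in Set.Ioc s T, ENNReal.ofReal (Q (X t ω) (Y t ω))) ∂P :=
          lintegral_add_left hQmT _
      _ ≤ ENNReal.ofReal (B * δ * Z) + ENNReal.ofReal (T * (B * δ * Z)) :=
          add_le_add term1 term2
      _ = ENNReal.ofReal (B * δ * Z + T * (B * δ * Z)) :=
          (ENNReal.ofReal_add (by positivity) (by positivity)).symm
      _ = ENNReal.ofReal (B * (1 + T) * δ * Z) := by ring_nf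
  have hrhs : (0:ℝ) ≤ B * (1 + T) * δ * Z := by positivity
  exact (ENNReal.ofReal_le_ofReal_iff hrhs).mp final
end
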